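/- arXiv:2406.03883 — 3 statements merged into one kernel-verified Lean document; each statement's English description precedes it below -/
import Mathlib

section
/- Let D be a directed graph and let a, b be vertices of D. Let P be a directed path in D and let Q be a directed a–b path in D. Then there exists a directed a–b path Q' with Q' ⊆ P ∪ Q such that P and Q' are laced. -/
set_option autoImplicit false

/-- A directed graph on a vertex type `V`: a set of vertices together with a set of
directed edges (ordered pairs of vertices). -/
structure DiGraph (V : Type*) where
  verts : Set V
  edges : Set (V × V)

namespace DiGraph

variable {V : Type*}

/-- Well-formedness: every edge joins two distinct vertices of the graph. -/
def WF (D : DiGraph V) : Prop :=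
  ∀ e ∈ D.edges, e.1 ∈ D.verts ∧ e.2 ∈ D.verts ∧ e.1 ≠ e.2

/-- `A` is a subgraph of `D`. -/
def IsSubgraph (A D : DiGraph V) : Prop :=
  A.verts ⊆ D.verts ∧ A.edges ⊆ D.edges ∧ ∀ e ∈ A.edges, e.1 ∈ A.verts ∧ e.2 ∈ A.verts

instance : Union (DiGraph V) := ⟨fun A B => ⟨A.verts ∪ B.verts, A.edges ∪ B.edges⟩⟩

instance : Inter (DiGraph V) := ⟨fun A B => ⟨A.verts ∩ B.verts, A.edges ∩ B.edges⟩⟩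

/-- Union of a family of directed graphs. -/
def iUnion {ι : Type*} (F : ι → DiGraph V) : DiGraph V :=
  ⟨⋃ i, (F i).verts, ⋃ i, (F i).edges⟩

/-- Union of a family of directed graphs indexed by a set of naturals. -/
def biUnion (s : Set ℕ) (F : ℕ → DiGraph V) : DiGraph V :=
  ⟨⋃ i ∈ s, (F i).verts, ⋃ i ∈ s, (F i).edges⟩

/-- The empty directed graph. -/
def emptyGraph : DiGraph V := ⟨∅, ∅⟩

/-- Delete a vertex (and all incident edges). -/
def deleteVert (D : DiGraph V) (w : V) : DiGraph V :=
  ⟨D.verts \ {w}, {e ∈ D.edges | e.1 ≠ w ∧ e.2 ≠ w}⟩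

/-- Delete an edge. -/
def deleteEdge (D : DiGraph V) (e : V × V) : DiGraph V :=
  ⟨D.verts, D.edges \ {e}⟩

end DiGraph

open DiGraph

variable {V : Type*}

/-- The edge set of a list of vertices, read as a directed path. -/
def pathEdges (l : List V) : Set (V × V) := {e | e ∈ l.zip l.tail}

/-- The directed graph of a directed path given by a list of vertices. -/
def pathGraph (l : List V) : DiGraph V := ⟨{v | v ∈ l}, pathEdges l⟩

/-- The directed graph `𝒟(P)` of an undirected path `P` given by a list of vertices:
each edge is replaced by the two opposite directed edges. -/
def doublePathGraph (l : List V) : DiGraph V :=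
  ⟨{v | v ∈ l}, {e | e ∈ l.zip l.tail ∨ (e.2, e.1) ∈ l.zip l.tail}⟩

/-- The edge set of a directed cycle through the given list of vertices. -/
def cycleEdges (l : List V) : Set (V × V) :=
  {e | ∃ i : Fin l.length,
    l.get i = e.1 ∧ l.get ⟨((i : ℕ) + 1) % l.length, Nat.mod_lt _ i.pos⟩ = e.2}

/-- The directed cycle through the given list of vertices. -/
def cycleGraph (l : List V) : DiGraph V := ⟨{v | v ∈ l}, cycleEdges l⟩

/-- `l` is a directed path in `D`: a nonempty list of distinct vertices of `D`
consecutively joined by edges of `D`. -/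
def IsPathList (D : DiGraph V) (l : List V) : Prop :=
  l ≠ [] ∧ l.Nodup ∧ (∀ v ∈ l, v ∈ D.verts) ∧
    List.Chain' (fun a b => (a, b) ∈ D.edges) l

/-- `l` is a directed `a`–`b` path in `D`. -/
def IsPathFrom (D : DiGraph V) (l : List V) (a b : V) : Prop :=
  IsPathList D l ∧ l.head? = some a ∧ l.getLast? = some b

/-- There is a directed `a`–`b` path in `D`. -/
def Reaches (D : DiGraph V) (a b : V) : Prop := ∃ l, IsPathFrom D l a b

/-- `D` is strongly connected. -/
def StronglyConnected (D : DiGraph V) : Prop :=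
  ∀ a ∈ D.verts, ∀ b ∈ D.verts, Reaches D a b

/-- `a` and `b` are mutually reachable in `D`. -/
def MutuallyReach (D : DiGraph V) (a b : V) : Prop := Reaches D a b ∧ Reaches D b a

/-- `P` is (the directed graph of) a directed path. -/
def IsPathGraph (P : DiGraph V) : Prop := ∃ l : List V, l ≠ [] ∧ l.Nodup ∧ P = pathGraph l

/-- `P` is a double path with endpoints `a` and `b`. -/
def IsDoublePathFrom (P : DiGraph V) (a b : V) : Prop :=
  ∃ l : List V, l ≠ [] ∧ l.Nodup ∧ l.head? = some a ∧ l.getLast? = some b ∧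
    P = doublePathGraph l

/-- `C` is the directed cycle on the list `l`. -/
def IsCycleGraphOn (C : DiGraph V) (l : List V) : Prop :=
  2 ≤ l.length ∧ l.Nodup ∧ C = cycleGraph l

/-- `C` is a directed cycle. -/
def IsCycleGraph (C : DiGraph V) : Prop := ∃ l, IsCycleGraphOn C l

/-- `l` is a directed `X`–`Y` path in `D`: its startvertex lies in `X`, its endvertex in `Y`,
and no internal vertex lies in `X ∪ Y`. -/
def IsXYPathList (D : DiGraph V) (X Y : Set V) (l : List V) : Prop :=
  IsPathList D l ∧ (∀ a, l.head? = some a → a ∈ X) ∧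
    (∀ b, l.getLast? = some b → b ∈ Y) ∧
    ∀ v ∈ l.tail.dropLast, v ∉ X ∪ Y

/-- `(u, v)` is the only outgoing edge of `u`. -/
def onlyOut (D : DiGraph V) (u v : V) : Prop :=
  (u, v) ∈ D.edges ∧ ∀ w, (u, w) ∈ D.edges → w = v

/-- `(u, v)` is the only incoming edge of `v`. -/
def onlyIn (D : DiGraph V) (u v : V) : Prop :=
  (u, v) ∈ D.edges ∧ ∀ w, (w, v) ∈ D.edges → w = u

/-- Contract the edge `(u, v)`, identifying the contracted vertex with `x`. -/
def contractEdgeTo (D : DiGraph V) (u v x : V) : DiGraph V :=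
  ⟨(D.verts \ {u, v}) ∪ {x},
   {e | (e.1 ∉ ({u, v} : Set V) ∧ e.2 ∉ ({u, v} : Set V) ∧ e ∈ D.edges) ∨
        (e.2 = x ∧ e.1 ∉ ({u, v} : Set V) ∧ ((e.1, u) ∈ D.edges ∨ (e.1, v) ∈ D.edges)) ∨
        (e.1 = x ∧ e.2 ∉ ({u, v} : Set V) ∧ ((u, e.2) ∈ D.edges ∨ (v, e.2) ∈ D.edges))}⟩

/-- A single butterfly contraction: `(u, v)` is butterfly contractible and the contracted
vertex is identified with `u` if `(u, v)` is the only incoming edge of `v`, and with `v`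
if it is the only outgoing edge of `u`. -/
def ButterflyStep (D D' : DiGraph V) : Prop :=
  ∃ u v x : V, ((onlyIn D u v ∧ x = u) ∨ (onlyOut D u v ∧ x = v)) ∧
    D' = contractEdgeTo D u v x

/-- `D` can be transformed into `H` by repeatedly contracting butterfly contractible edges. -/
def ButterflyContracts (D H : DiGraph V) : Prop :=
  Relation.ReflTransGen ButterflyStep D H

/-- `H` is a butterfly minor of `D`: `H` is obtained from a subgraph of `D` by repeatedly
contracting butterfly contractible edges. -/
def IsButterflyMinor (H D : DiGraph V) : Prop :=
  ∃ D₀, IsSubgraph D₀ D ∧ ButterflyContracts D₀ H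

section Laced

variable [DecidableEq V]

/-- The segment `xPy` of a path list `P` from `x` to `y`. -/
def seg (P : List V) (x y : V) : List V :=
  (P.drop (P.idxOf x)).take (P.idxOf y + 1 - P.idxOf x)

/-- The two directed paths `P` and `Q` are laced. -/
def Laced (P Q : List V) : Prop :=
  (∀ v ∈ P, v ∉ Q) ∨
  ∃ (ℓ : ℕ) (hℓ : 0 < ℓ) (x y : Fin ℓ → V),
    (∀ i, x i ∈ P ∧ x i ∈ Q ∧ y i ∈ P ∧ y i ∈ Q) ∧
    (∀ i, P.idxOf (x i) ≤ P.idxOf (y i)) ∧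
    (∀ i j : Fin ℓ, (j : ℕ) = (i : ℕ) + 1 → P.idxOf (y i) < P.idxOf (x j)) ∧
    (∀ i, Q.idxOf (x i) ≤ Q.idxOf (y i)) ∧
    (∀ i j : Fin ℓ, (j : ℕ) = (i : ℕ) + 1 → Q.idxOf (y j) < Q.idxOf (x i)) ∧
    (∀ i, seg P (x i) (y i) = seg Q (x i) (y i)) ∧
    (∀ i j : Fin ℓ, (j : ℕ) = (i : ℕ) + 1 →
       ∀ v ∈ ((seg Q (y j) (x i)).tail).dropLast, v ∉ P) ∧
    (∀ v ∈ Q.take (Q.idxOf (x ⟨ℓ - 1, Nat.sub_lt hℓ Nat.one_pos⟩) + 1),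
       v ∈ P → v = x ⟨ℓ - 1, Nat.sub_lt hℓ Nat.one_pos⟩) ∧
    (∀ v ∈ Q.drop (Q.idxOf (y ⟨0, hℓ⟩)), v ∈ P → v = y ⟨0, hℓ⟩)

end Laced

/-- `T` is an out-arborescence with root `r`. -/
def IsOutArborescence (T : DiGraph V) (r : V) : Prop :=
  r ∈ T.verts ∧ T.WF ∧ (∀ v ∈ T.verts, Reaches T r v) ∧
    (∀ v ∈ T.verts, v ≠ r → ∃! u, (u, v) ∈ T.edges) ∧ ∀ u, (u, r) ∉ T.edges

/-- `T` is an in-arborescence with root `r`. -/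
def IsInArborescence (T : DiGraph V) (r : V) : Prop :=
  r ∈ T.verts ∧ T.WF ∧ (∀ v ∈ T.verts, Reaches T v r) ∧
    (∀ v ∈ T.verts, v ≠ r → ∃! u, (v, u) ∈ T.edges) ∧ ∀ u, (r, u) ∉ T.edges

/-- Contract a set `S` of vertices of `D` to the single vertex `r`. -/
def contractSetTo (D : DiGraph V) (S : Set V) (r : V) : DiGraph V :=
  ⟨(D.verts \ S) ∪ {r},
   {e | (e.1 ∉ S ∧ e.2 ∉ S ∧ e ∈ D.edges) ∨
        (e.2 = r ∧ e.1 ∉ S ∧ ∃ s ∈ S, (e.1, s) ∈ D.edges) ∨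
        (e.1 = r ∧ e.2 ∉ S ∧ ∃ s ∈ S, (s, e.2) ∈ D.edges)}⟩

/-- `D'` is obtained from `D` by replacing the vertex `w` by the directed cycle on `c`,
such that the strong components of `D − w` become incident with distinct vertices of this
cycle; `f` assigns to each vertex of `D − w` the cycle vertex its strong component is
attached to. -/
def ReplacedByCycle (D : DiGraph V) (w : V) (c : List V) (f : V → V) (D' : DiGraph V) : Prop :=
  c.Nodup ∧ 2 ≤ c.length ∧
  (∀ v ∈ c, v = w ∨ v ∉ D.verts) ∧
  (∀ u ∈ (D.deleteVert w).verts, f u ∈ c) ∧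
  (∀ u v, MutuallyReach (D.deleteVert w) u v → f u = f v) ∧
  (∀ u v, u ∈ (D.deleteVert w).verts → v ∈ (D.deleteVert w).verts →
     ¬ MutuallyReach (D.deleteVert w) u v → f u ≠ f v) ∧
  D'.verts = (D.verts \ {w}) ∪ {v | v ∈ c} ∧
  D'.edges = (D.deleteVert w).edges ∪ cycleEdges c
    ∪ {e | (e.1, w) ∈ D.edges ∧ e.1 ≠ w ∧ e.2 = f e.1}
    ∪ {e | (w, e.2) ∈ D.edges ∧ e.2 ≠ w ∧ e.1 = f e.2}

/-- `D` is shaped by a star, with set of teeth `T`. -/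
def StarShapedWithTeeth (D : DiGraph V) (T : Set V) : Prop :=
  (IsCycleGraph D ∧ T = D.verts) ∨
  ∃ (m : ℕ) (c : V) (F : Fin m → List V),
    0 < m ∧
    (∀ i, 2 ≤ (F i).length ∧ (F i).Nodup ∧ (F i).head? = some c) ∧
    (∀ i j, i ≠ j → ∀ v, v ∈ F i → v ∈ F j → v = c) ∧
    T = {v | ∃ i, (F i).getLast? = some v} ∧
    (D = DiGraph.iUnion (fun i => doublePathGraph (F i)) ∨
     (3 ≤ m ∧ ∃ (cyc : List V) (f : V → V),
        cyc.length = m ∧ c ∉ cyc ∧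
        ReplacedByCycle (DiGraph.iUnion fun i => doublePathGraph (F i)) c cyc f D))

/-- Replacing the junction `j` by a directed cycle of length 3: if `j` is a tooth then `j`
is a vertex of this cycle and the strong components of `D − j` become incident with
distinct other vertices; otherwise the strong components become incident with distinct
vertices of the cycle. -/
def TriangleReplaceStep {V : Type*} (teeth : Set V) (j : V) (D D₁ : DiGraph V) : Prop :=
  ∃ (c : List V) (f : V → V),
    c.length = 3 ∧
    ((j ∈ teeth ∧ j ∈ c ∧ ∀ u ∈ (D.deleteVert j).verts, f u ≠ j) ∨
     (j ∉ teeth ∧ j ∉ c)) ∧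
    ReplacedByCycle D j c f D₁

/-- Iteratively replace the junctions in the given list by directed cycles of length 3. -/
inductive ReplaceChain {V : Type*} (teeth : Set V) : DiGraph V → List V → DiGraph V → Prop
  | nil (D : DiGraph V) : ReplaceChain teeth D [] D
  | cons {D D₁ D' : DiGraph V} {j : V} {js : List V} :
      TriangleReplaceStep teeth j D D₁ → ReplaceChain teeth D₁ js D' →
      ReplaceChain teeth D (j :: js) D'

/-- `D` is shaped by a comb (with back `B` and spikes `S`), with set of teeth `T`. -/
def CombShapedWithTeeth (D : DiGraph V) (T : Set V) : Prop :=
  ∃ (B : List V) (m : ℕ) (S : Fin m → List V),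
    B ≠ [] ∧ B.Nodup ∧
    (∀ i, S i ≠ [] ∧ (S i).Nodup) ∧
    (∀ i, ∀ h, (S i).head? = some h → h ∈ B) ∧
    (∀ i, ∀ v ∈ (S i).tail, v ∉ B) ∧
    (∀ i j, i ≠ j → ∀ v ∈ S i, v ∉ S j) ∧
    T = {v | ∃ i, (S i).getLast? = some v} ∧
    (D = doublePathGraph B ∪ DiGraph.iUnion (fun i => doublePathGraph (S i)) ∨
     ∃ js : List V, js.Nodup ∧
       {j | j ∈ js} = {j | j ∈ B.tail.dropLast ∧ ∃ i, (S i).head? = some j} ∧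
       ReplaceChain T (doublePathGraph B ∪ DiGraph.iUnion fun i => doublePathGraph (S i)) js D)

/-- `D` is shaped by a star. -/
def ShapedByStar (D : DiGraph V) : Prop := ∃ T, StarShapedWithTeeth D T

/-- `D` is shaped by a comb. -/
def ShapedByComb (D : DiGraph V) : Prop := ∃ T, CombShapedWithTeeth D T


section LacedAux

set_option linter.unusedSectionVars false
set_option linter.unnecessarySimpa false

open List

variable {V : Type*} [DecidableEq V]

lemma pathEdges_getElem (l : List V) (k : ℕ) (h : k + 1 < l.length) :
    (l[k], l[k+1]) ∈ pathEdges l := by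
  have hz : k < (l.zip l.tail).length := by
    simp only [List.length_zip, List.length_tail]
    omega
  have he : (l.zip l.tail)[k] = (l[k], l[k+1]) := by
    rw [List.getElem_zip, List.getElem_tail]
  have hm := List.getElem_mem hz
  rw [he] at hm
  exact hm

lemma chain'_rel_of_pathEdges {R : V → V → Prop} :
    ∀ {l : List V}, List.Chain' R l → ∀ {a b : V}, (a, b) ∈ pathEdges l → R a b := by
  intro l
  induction l with
  | nil => intro _ a b h; simp [pathEdges] at h
  | cons x t ih =>
    intro hc a b h
    cases t with
    | nil => simp [pathEdges] at h
    | cons y t' =>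
      change List.IsChain _ (x :: y :: t') at hc
      rw [List.isChain_cons_cons] at hc
      simp only [pathEdges, Set.mem_setOf_eq, List.tail_cons, List.zip_cons_cons,
        List.mem_cons] at h
      rcases h with h1 | h1
      · injection h1 with ha hb
        subst ha; subst hb
        exact hc.1
      · exact ih hc.2 h1

lemma chain'_pathEdges (l : List V) : List.Chain' (fun a b => (a, b) ∈ pathEdges l) l := by
  change List.IsChain _ l
  rw [List.isChain_iff_getElem]
  intro i h
  exact pathEdges_getElem l i (by omega)

lemma pathEdges_cons_subset (a : V) (l : List V) : pathEdges l ⊆ pathEdges (a :: l) := by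
  intro e he
  cases l with
  | nil => simp [pathEdges] at he
  | cons b t =>
    simp only [pathEdges, Set.mem_setOf_eq, List.tail_cons, List.zip_cons_cons,
      List.mem_cons] at he ⊢
    exact Or.inr he

lemma pathEdges_append_right (l₁ l₂ : List V) : pathEdges l₂ ⊆ pathEdges (l₁ ++ l₂) := by
  induction l₁ with
  | nil => simp
  | cons a t ih => exact fun e he => pathEdges_cons_subset a (t ++ l₂) (ih he)

lemma pathEdges_append_left : ∀ (l₁ l₂ : List V), pathEdges l₁ ⊆ pathEdges (l₁ ++ l₂)
  | [], _ => by simp [pathEdges]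
  | [a], _ => by simp [pathEdges]
  | a :: b :: t, l₂ => by
    intro e he
    simp only [pathEdges, Set.mem_setOf_eq, List.tail_cons, List.zip_cons_cons,
      List.mem_cons, List.cons_append] at he ⊢
    rcases he with h | h
    · exact Or.inl h
    · exact Or.inr (pathEdges_append_left (b :: t) l₂ h)

lemma pathEdges_infix {l' l : List V} (h : l' <:+: l) : pathEdges l' ⊆ pathEdges l := by
  obtain ⟨s, t, rfl⟩ := h
  intro e he
  rw [List.append_assoc]
  exact pathEdges_append_right s _ (pathEdges_append_left l' t he)

lemma mem_of_pathEdges {l : List V} {e : V × V} (h : e ∈ pathEdges l) : e.1 ∈ l ∧ e.2 ∈ l := by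
  obtain ⟨a, b⟩ := e
  have h2 := List.of_mem_zip h
  exact ⟨h2.1, List.mem_of_mem_tail h2.2⟩

lemma chain'_imp_mem {α : Type*} {R S : α → α → Prop} {l : List α}
    (h : ∀ a ∈ l, ∀ b ∈ l, R a b → S a b) (hc : List.Chain' R l) : List.Chain' S l := by
  change List.IsChain R l at hc
  change List.IsChain S l
  rw [List.isChain_iff_getElem] at hc ⊢
  intro i hi
  exact h _ (List.getElem_mem _) _ (List.getElem_mem _) (hc i hi)

lemma idxOf_head? {l : List V} {a : V} (h : l.head? = some a) : l.idxOf a = 0 := by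
  cases l with
  | nil => simp at h
  | cons b t =>
    simp only [List.head?_cons, Option.some.injEq] at h
    subst h
    exact List.idxOf_cons_self

lemma eq_cons_of_head? {α : Type*} {l : List α} {a : α} (h : l.head? = some a) : ∃ t, l = a :: t := by
  cases l with
  | nil => simp at h
  | cons b t =>
    simp only [List.head?_cons, Option.some.injEq] at h
    exact ⟨t, by rw [h]⟩

lemma getLast?_append_of_ne_nil {α : Type*} {l₁ l₂ : List α} (h : l₂ ≠ []) :
    (l₁ ++ l₂).getLast? = l₂.getLast? := by
  rw [List.getLast?_append, List.getLast?_eq_getLast h]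
  rfl

lemma getLast?_drop_of_ne_nil {α : Type*} {l : List α} {n : ℕ} (h : l.drop n ≠ []) :
    (l.drop n).getLast? = l.getLast? := by
  conv_rhs => rw [← List.take_append_drop n l]
  rw [getLast?_append_of_ne_nil h]

lemma seg_append {pre l : List V} {u v : V} (hupre : u ∉ pre) (hvpre : v ∉ pre) :
    seg (pre ++ l) u v = seg l u v := by
  unfold seg
  rw [List.idxOf_append_of_notMem hupre, List.idxOf_append_of_notMem hvpre,
    show pre.length + List.idxOf v l + 1 - (pre.length + List.idxOf u l)
      = List.idxOf v l + 1 - List.idxOf u l by omega, List.drop_length_add_append]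

lemma seg_length {P : List V} {x y : V} (hy : y ∈ P) (hxy : P.idxOf x ≤ P.idxOf y) :
    (seg P x y).length = P.idxOf y + 1 - P.idxOf x := by
  have hj : P.idxOf y < P.length := List.idxOf_lt_length_iff.2 hy
  unfold seg
  rw [List.length_take, List.length_drop]
  omega

lemma seg_ne_nil {P : List V} {x y : V} (hy : y ∈ P) (hxy : P.idxOf x ≤ P.idxOf y) :
    seg P x y ≠ [] := by
  have hj : P.idxOf y < P.length := List.idxOf_lt_length_iff.2 hy
  apply List.ne_nil_of_length_pos
  rw [seg_length hy hxy]
  omega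

lemma seg_getElem {P : List V} {x y : V} (k : ℕ)
    (hk : P.idxOf x + k < P.length) (h2 : k < (seg P x y).length) :
    (seg P x y)[k]'h2 = P[P.idxOf x + k]'hk := by
  unfold seg at h2 ⊢
  rw [List.getElem_take, List.getElem_drop]

lemma seg_isInfix (P : List V) (x y : V) : seg P x y <:+: P := by
  unfold seg
  exact ((List.take_prefix _ _).isInfix).trans ((List.drop_suffix _ _).isInfix)

lemma seg_nodup {P : List V} (hP : P.Nodup) (x y : V) : (seg P x y).Nodup :=
  List.Nodup.sublist (seg_isInfix P x y).sublist hP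

lemma seg_head? {P : List V} {x y : V} (hx : x ∈ P) (hy : y ∈ P)
    (hxy : P.idxOf x ≤ P.idxOf y) : (seg P x y).head? = some x := by
  have hi : P.idxOf x < P.length := List.idxOf_lt_length_iff.2 hx
  have hlen := seg_length hy hxy
  have hne : seg P x y ≠ [] := seg_ne_nil hy hxy
  have h0 : 0 < (seg P x y).length := by rw [hlen]; omega
  rw [List.head?_eq_head hne, List.head_eq_getElem]
  have := seg_getElem (P := P) (x := x) (y := y) 0 (by omega) h0
  rw [this]
  congr 1
  have := List.idxOf_get (a := x) (l := P) hi
  simpa [List.get_eq_getElem] using this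

lemma seg_getLast? {P : List V} {x y : V} (hy : y ∈ P)
    (hxy : P.idxOf x ≤ P.idxOf y) : (seg P x y).getLast? = some y := by
  have hj : P.idxOf y < P.length := List.idxOf_lt_length_iff.2 hy
  have hlen := seg_length hy hxy
  have hne : seg P x y ≠ [] := seg_ne_nil hy hxy
  rw [List.getLast?_eq_getLast hne, List.getLast_eq_getElem]
  have hk : (seg P x y).length - 1 < (seg P x y).length := by rw [hlen]; omega
  have he : (seg P x y).length - 1 = P.idxOf y - P.idxOf x := by rw [hlen]; omega
  have h3 : P.idxOf x + (P.idxOf y - P.idxOf x) < P.length := by omega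
  congr 1
  have := seg_getElem (P := P) (x := x) (y := y) (P.idxOf y - P.idxOf x) h3 (by omega)
  calc (seg P x y)[(seg P x y).length - 1] 
      = (seg P x y)[P.idxOf y - P.idxOf x]'(by omega) := by
        congr 1
    _ = P[P.idxOf x + (P.idxOf y - P.idxOf x)]'h3 := this
    _ = P[P.idxOf y]'hj := by congr 1; omega
    _ = y := by
        have := List.idxOf_get (a := y) (l := P) hj
        simpa [List.get_eq_getElem] using this

lemma mem_seg_bounds {P : List V} {x y : V} (hP : P.Nodup) (hy : y ∈ P)
    (hxy : P.idxOf x ≤ P.idxOf y) :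
    ∀ v ∈ seg P x y, v ∈ P ∧ P.idxOf x ≤ P.idxOf v ∧ P.idxOf v ≤ P.idxOf y := by
  have hj : P.idxOf y < P.length := List.idxOf_lt_length_iff.2 hy
  have hlen := seg_length hy hxy
  intro v hv
  obtain ⟨k, hk, hkv⟩ := List.mem_iff_getElem.1 hv
  have hik : P.idxOf x + k < P.length := by omega
  rw [seg_getElem k hik hk] at hkv
  subst hkv
  refine ⟨List.getElem_mem _, ?_⟩
  have h2 := List.get_idxOf hP ⟨P.idxOf x + k, hik⟩
  simp only [List.get_eq_getElem] at h2
  rw [h2]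
  omega

lemma mem_seg_self_left {P : List V} {x y : V} (hx : x ∈ P) (hy : y ∈ P)
    (hxy : P.idxOf x ≤ P.idxOf y) : x ∈ seg P x y :=
  List.mem_of_mem_head? (by rw [seg_head? hx hy hxy]; exact rfl)

lemma mem_seg_self_right {P : List V} {x y : V} (hy : y ∈ P)
    (hxy : P.idxOf x ≤ P.idxOf y) : y ∈ seg P x y := by
  have := seg_getLast? hy hxy
  have hne : seg P x y ≠ [] := seg_ne_nil hy hxy
  rw [List.getLast?_eq_getLast hne, Option.some.injEq] at this
  have hm := List.getLast_mem hne
  rwa [this] at hm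

lemma seg_idxOf_last {P : List V} {x y : V} (hP : P.Nodup) (hy : y ∈ P)
    (hxy : P.idxOf x ≤ P.idxOf y) :
    (seg P x y).idxOf y = (seg P x y).length - 1 := by
  have hne : seg P x y ≠ [] := seg_ne_nil hy hxy
  have hnd : (seg P x y).Nodup := seg_nodup hP x y
  have hk : (seg P x y).length - 1 < (seg P x y).length := by
    have := List.length_pos_iff.2 hne; omega
  have hgl := seg_getLast? hy hxy
  rw [List.getLast?_eq_getLast hne, List.getLast_eq_getElem, Option.some.injEq] at hgl
  have h2 := List.get_idxOf hnd ⟨(seg P x y).length - 1, hk⟩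
  simp only [List.get_eq_getElem] at h2
  rw [hgl] at h2
  exact h2


lemma mem_drop_length_sub_one {α : Type*} {l : List α} (h : l ≠ []) {v : α}
    (hv : v ∈ l.drop (l.length - 1)) : v = l.getLast h := by
  obtain ⟨k, hk, hkv⟩ := List.mem_iff_getElem.1 hv
  rw [List.getElem_drop] at hkv
  rw [List.length_drop] at hk
  have hl : 0 < l.length := List.length_pos_iff.2 h
  have hk0 : k = 0 := by omega
  subst hk0
  rw [List.getLast_eq_getElem, ← hkv]
  simp

end LacedAux


section LacedMain

set_option linter.unusedSectionVars false
set_option maxHeartbeats 1000000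

open List

variable {V : Type*} [DecidableEq V]

/-- Invariants carried through the inductive construction of a laced path. -/
structure CGood (P Q R : List V) (ms : List (V × V)) : Prop where
  rne : R ≠ []
  rnd : R.Nodup
  rhead : R.head? = Q.head?
  rlast : R.getLast? = Q.getLast?
  rmem : ∀ v ∈ R, v ∈ P ∨ v ∈ Q
  redge : List.Chain' (fun u v => (u, v) ∈ pathEdges P ∨ (u, v) ∈ pathEdges Q) R
  msne : ms ≠ []
  mhead : ms.head?.map Prod.fst = Q.head?
  mmem : ∀ m ∈ ms, m.1 ∈ P ∧ m.1 ∈ R ∧ m.2 ∈ P ∧ m.2 ∈ R ∧ m.2 ∈ Q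
  mono : ∀ m ∈ ms, P.idxOf m.1 ≤ P.idxOf m.2 ∧ R.idxOf m.1 ≤ R.idxOf m.2 ∧
    seg P m.1 m.2 = seg R m.1 m.2
  mchain : List.Chain' (fun p q => P.idxOf q.2 < P.idxOf p.1 ∧
    R.idxOf p.2 < R.idxOf q.1 ∧ ∀ v ∈ ((seg R p.2 q.1).tail).dropLast, v ∉ P) ms
  mtail : ∀ p, ms.getLast? = some p → ∀ v ∈ R.drop (R.idxOf p.2), v ∈ P → v = p.2
  mbound : ∀ p, ms.head? = some p → ∀ v ∈ R, v ∈ P → P.idxOf v ≤ P.idxOf p.2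

lemma laced_of_marks (P R : List V) (ms : List (V × V)) (msne : ms ≠ [])
    (mmem : ∀ m ∈ ms, m.1 ∈ P ∧ m.1 ∈ R ∧ m.2 ∈ P ∧ m.2 ∈ R)
    (mono : ∀ m ∈ ms, P.idxOf m.1 ≤ P.idxOf m.2 ∧ R.idxOf m.1 ≤ R.idxOf m.2 ∧
      seg P m.1 m.2 = seg R m.1 m.2)
    (mchain : List.Chain' (fun p q => P.idxOf q.2 < P.idxOf p.1 ∧
      R.idxOf p.2 < R.idxOf q.1 ∧ ∀ v ∈ ((seg R p.2 q.1).tail).dropLast, v ∉ P) ms)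
    (minit : ∀ p, ms.head? = some p →
      ∀ v ∈ R.take (R.idxOf p.1 + 1), v ∈ P → v = p.1)
    (mtail : ∀ p, ms.getLast? = some p →
      ∀ v ∈ R.drop (R.idxOf p.2), v ∈ P → v = p.2) :
    Laced P R := by
  right
  have hℓ : 0 < ms.length := List.length_pos_iff.2 msne
  have hidx : ∀ i : Fin ms.length, ms.length - 1 - (i : ℕ) < ms.length := fun i => by omega
  have hh : ms.head? = some (ms.get ⟨0, hℓ⟩) := by
    rw [List.head?_eq_head msne, List.head_eq_getElem, List.get_eq_getElem]
  have hl : ms.getLast? = some (ms.get ⟨ms.length - 1, by omega⟩) := by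
    rw [List.getLast?_eq_getLast msne, List.getLast_eq_getElem, List.get_eq_getElem]
  have hadj : ∀ i j : Fin ms.length, (j : ℕ) = (i : ℕ) + 1 →
      P.idxOf (ms.get ⟨ms.length - 1 - (i:ℕ), hidx i⟩).2
        < P.idxOf (ms.get ⟨ms.length - 1 - (j:ℕ), hidx j⟩).1 ∧
      R.idxOf (ms.get ⟨ms.length - 1 - (j:ℕ), hidx j⟩).2
        < R.idxOf (ms.get ⟨ms.length - 1 - (i:ℕ), hidx i⟩).1 ∧
      ∀ v ∈ ((seg R (ms.get ⟨ms.length - 1 - (j:ℕ), hidx j⟩).2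
          (ms.get ⟨ms.length - 1 - (i:ℕ), hidx i⟩).1).tail).dropLast, v ∉ P := by
    intro i j hij
    have hj2 : (i : ℕ) + 1 < ms.length := hij ▸ j.isLt
    have hrel := List.isChain_iff_getElem.1 mchain (ms.length - 1 - (j : ℕ)) (by omega)
    simp only [List.get_eq_getElem] at hrel ⊢
    have he : ms.length - 1 - (j : ℕ) + 1 = ms.length - 1 - (i : ℕ) := by omega
    simp only [he] at hrel
    exact hrel
  refine ⟨ms.length, hℓ, fun i => (ms.get ⟨ms.length - 1 - i, hidx i⟩).1,
    fun i => (ms.get ⟨ms.length - 1 - i, hidx i⟩).2, ?_, ?_, ?_, ?_, ?_, ?_, ?_, ?_, ?_⟩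
  · intro i
    have h := mmem _ (List.get_mem ms ⟨_, hidx i⟩)
    exact ⟨h.1, h.2.1, h.2.2.1, h.2.2.2⟩
  · intro i
    exact (mono _ (List.get_mem ms ⟨_, hidx i⟩)).1
  · intro i j hij
    exact (hadj i j hij).1
  · intro i
    exact (mono _ (List.get_mem ms ⟨_, hidx i⟩)).2.1
  · intro i j hij
    exact (hadj i j hij).2.1
  · intro i
    exact (mono _ (List.get_mem ms ⟨_, hidx i⟩)).2.2
  · intro i j hij
    exact (hadj i j hij).2.2
  · have he : ms.length - 1 - ((⟨ms.length - 1, Nat.sub_lt hℓ Nat.one_pos⟩ : Fin ms.length) : ℕ)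
        = 0 := by simp
    simp only [he]
    exact minit _ hh
  · have he : ms.length - 1 - ((⟨0, hℓ⟩ : Fin ms.length) : ℕ) = ms.length - 1 := by simp
    simp only [he]
    exact mtail _ hl


lemma seg_prepend_self {P : List V} (hPnd : P.Nodup) {x y : V} (hx : x ∈ P) (hy : y ∈ P)
    (hxy : P.idxOf x ≤ P.idxOf y) (rest : List V) :
    seg (seg P x y ++ rest) x y = seg P x y := by
  have hys := mem_seg_self_right hy hxy
  have h1 : (seg P x y ++ rest).idxOf x = 0 :=
    idxOf_head? (by rw [List.head?_append, seg_head? hx hy hxy]; rfl)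
  have h2 : (seg P x y ++ rest).idxOf y = (seg P x y).length - 1 := by
    rw [List.idxOf_append_of_mem hys, seg_idxOf_last hPnd hy hxy]
  have hlenpos : 0 < (seg P x y).length := List.length_pos_iff.2 (seg_ne_nil hy hxy)
  have hrfl : seg (seg P x y ++ rest) x y
      = ((seg P x y ++ rest).drop ((seg P x y ++ rest).idxOf x)).take
        ((seg P x y ++ rest).idxOf y + 1 - (seg P x y ++ rest).idxOf x) := rfl
  rw [hrfl, h1, h2, List.drop_zero,
    show (seg P x y).length - 1 + 1 - 0 = (seg P x y).length by omega, List.take_left]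

lemma exists_CGood (P : List V) (hPnd : P.Nodup) :
    ∀ (n : ℕ) (Q : List V), Q.length ≤ n → Q ≠ [] → Q.Nodup →
      (∀ z, Q.head? = some z → z ∈ P) → ∃ R ms, CGood P Q R ms := by
  intro n
  induction n with
  | zero =>
    intro Q hlen hne _ _
    have := List.length_pos_iff.2 hne
    omega
  | succ n ih =>
    intro Q hQlen hQne hQnd hQhead
    have hQ0 : 0 < Q.length := List.length_pos_iff.2 hQne
    obtain ⟨x, hxh⟩ : ∃ z, Q.head? = some z := by
      cases Q with
      | nil => exact absurd rfl hQne
      | cons a t => exact ⟨a, rfl⟩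
    have hxP : x ∈ P := hQhead x hxh
    have hx0 : Q[0]'hQ0 = x := by
      rw [List.head?_eq_getElem?, List.getElem?_eq_getElem hQ0] at hxh
      exact Option.some.inj hxh
    have hpred0 : 0 < Q.length ∧ Q.getD 0 x ∈ P ∧ P.idxOf x ≤ P.idxOf (Q.getD 0 x) := by
      refine ⟨hQ0, ?_⟩
      rw [List.getD_eq_getElem Q x hQ0, hx0]
      exact ⟨hxP, le_refl _⟩
    set iy := Nat.findGreatest
      (fun k => k < Q.length ∧ Q.getD k x ∈ P ∧ P.idxOf x ≤ P.idxOf (Q.getD k x))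
      (Q.length - 1) with hiydef
    have hiy : iy < Q.length ∧ Q.getD iy x ∈ P ∧ P.idxOf x ≤ P.idxOf (Q.getD iy x) := by
      rw [hiydef]
      exact Nat.findGreatest_spec
        (P := fun k => k < Q.length ∧ Q.getD k x ∈ P ∧ P.idxOf x ≤ P.idxOf (Q.getD k x))
        (Nat.zero_le _) hpred0
    have hiylt : iy < Q.length := hiy.1
    have hgr : ∀ k, iy < k → k < Q.length →
        ¬(k < Q.length ∧ Q.getD k x ∈ P ∧ P.idxOf x ≤ P.idxOf (Q.getD k x)) := by
      intro k h1 h2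
      rw [hiydef] at h1
      exact Nat.findGreatest_is_greatest h1 (by omega)
    set y := Q[iy]'hiylt with hydef
    have hyP : y ∈ P := by
      have h := hiy.2.1
      rwa [List.getD_eq_getElem Q x hiylt] at h
    have hxyP : P.idxOf x ≤ P.idxOf y := by
      have h := hiy.2.2
      rwa [List.getD_eq_getElem Q x hiylt] at h
    have hyQ : y ∈ Q := List.getElem_mem hiylt
    set A := Q.drop (iy + 1) with hAdef
    have hAmem : ∀ v ∈ A, v ∈ P → P.idxOf v < P.idxOf x := by
      intro v hv hvP
      obtain ⟨t, ht, htv⟩ := List.mem_iff_getElem.1 hv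
      have ht' : t < Q.length - (iy + 1) := by rwa [hAdef, List.length_drop] at ht
      have hlt : iy + 1 + t < Q.length := by omega
      have htv' : Q[iy + 1 + t]'hlt = v := by
        rw [← htv]
        simp only [hAdef, List.getElem_drop]
      by_contra hle
      refine hgr (iy + 1 + t) (by omega) hlt ⟨hlt, ?_⟩
      rw [List.getD_eq_getElem Q x hlt, htv']
      exact ⟨hvP, by omega⟩
    have hAnd : A.Nodup := hQnd.sublist (List.drop_sublist _ _)
    have hAinfix : A <:+: Q := (List.drop_suffix _ _).isInfix
    have hAQ : ∀ v ∈ A, v ∈ Q := fun v hv => by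
      rw [hAdef] at hv
      exact List.mem_of_mem_drop hv
    have hsne := seg_ne_nil hyP hxyP
    have hshead := seg_head? hxP hyP hxyP
    have hslast := seg_getLast? hyP hxyP
    have hsnd := seg_nodup hPnd x y
    have hsmem := mem_seg_bounds hPnd hyP hxyP
    have hsinfix := seg_isInfix P x y
    have hsidxy := seg_idxOf_last hPnd hyP hxyP
    have hslenpos : 0 < (seg P x y).length := List.length_pos_iff.2 hsne
    have hxseg : x ∈ seg P x y := mem_seg_self_left hxP hyP hxyP
    have hyseg : y ∈ seg P x y := mem_seg_self_right hyP hxyP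
    have hsegchain : List.Chain' (fun u v => (u, v) ∈ pathEdges P ∨ (u, v) ∈ pathEdges Q)
        (seg P x y) := ((chain'_pathEdges P).infix hsinfix).imp (fun a b h => Or.inl h)
    have hAchain : List.Chain' (fun u v => (u, v) ∈ pathEdges P ∨ (u, v) ∈ pathEdges Q) A :=
      ((chain'_pathEdges Q).infix hAinfix).imp (fun a b h => Or.inr h)
    have hjunc : ∀ (h1 : iy + 1 < Q.length), (y, Q[iy + 1]'h1) ∈ pathEdges Q := by
      intro h1
      have h := pathEdges_getElem Q iy (by omega)
      rw [hydef]
      exact h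
    by_cases hAP : ∃ v ∈ A, v ∈ P
    case neg =>
      push_neg at hAP
      set R := seg P x y ++ A with hRdef
      have hdisj : (seg P x y).Disjoint A := fun v hv hvA => hAP _ hvA (hsmem v hv).1
      have hRhead : R.head? = some x := by
        rw [hRdef, List.head?_append, hshead]
        rfl
      have hRx0 : R.idxOf x = 0 := idxOf_head? hRhead
      have hRy : R.idxOf y = (seg P x y).length - 1 := by
        rw [hRdef, List.idxOf_append_of_mem hyseg, hsidxy]
      have hsegR : seg R x y = seg P x y := by
        rw [hRdef]
        exact seg_prepend_self hPnd hxP hyP hxyP A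
      refine ⟨R, [(x, y)], ⟨?_, ?_, ?_, ?_, ?_, ?_, ?_, ?_, ?_, ?_, ?_, ?_, ?_⟩⟩
      · rw [hRdef]
        intro h
        exact hsne (List.append_eq_nil_iff.1 h).1
      · rw [hRdef]
        exact List.nodup_append.2 ⟨hsnd, hAnd, fun _ ha _ hb hab => hdisj ha (hab ▸ hb)⟩
      · rw [hRhead, hxh]
      · by_cases hA0 : A = []
        · have hlen0 : A.length = 0 := by rw [hA0]; rfl
          rw [hAdef, List.length_drop] at hlen0
          have hiy' : iy = Q.length - 1 := by omega
          rw [hRdef, hA0, List.append_nil, hslast, List.getLast?_eq_getLast hQne,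
            List.getLast_eq_getElem, hydef]
          simp only [hiy']
        · rw [hRdef, getLast?_append_of_ne_nil hA0, hAdef]
          exact getLast?_drop_of_ne_nil (by rw [hAdef] at hA0; exact hA0)
      · intro v hv
        rw [hRdef, List.mem_append] at hv
        rcases hv with h | h
        · exact Or.inl (hsmem v h).1
        · exact Or.inr (hAQ v h)
      · rw [hRdef]
        refine List.isChain_append.2 ⟨hsegchain, hAchain, ?_⟩
        intro u hu w hw
        have hAne : A ≠ [] := by
          intro h
          rw [h] at hw
          simp at hw
        have hApos : 0 < A.length := List.length_pos_iff.2 hAne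
        have h1 : iy + 1 < Q.length := by
          have hp := hApos
          rw [hAdef, List.length_drop] at hp
          omega
        have hu' : u = y := by
          rw [hslast] at hu
          simp only [Option.mem_def, Option.some.injEq] at hu
          exact hu.symm
        have hw' : w = Q[iy + 1]'h1 := by
          rw [List.head?_eq_head hAne, List.head_eq_getElem] at hw
          simp only [Option.mem_def, Option.some.injEq] at hw
          rw [← hw]
          simp only [hAdef, List.getElem_drop, Nat.add_zero]
        rw [hu', hw']
        exact Or.inr (hjunc h1)
      · simp
      · simpa using hxh.symm
      · intro m hm
        have hm' : m = (x, y) := by simpa using hm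
        subst hm'
        refine ⟨hxP, ?_, hyP, ?_, hyQ⟩
        · rw [hRdef]; exact List.mem_append_left _ hxseg
        · rw [hRdef]; exact List.mem_append_left _ hyseg
      · intro m hm
        have hm' : m = (x, y) := by simpa using hm
        subst hm'
        refine ⟨hxyP, ?_, hsegR.symm⟩
        rw [hRx0]
        exact Nat.zero_le _
      · exact List.isChain_singleton _
      · intro p hp v hv hvP
        have hp' : p = (x, y) := by simpa using hp.symm
        subst hp'
        rw [hRy, hRdef, List.drop_append_of_le_length (by omega), List.mem_append] at hv
        rcases hv with h | h
        · have hgl : (seg P x y).getLast hsne = y := by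
            have h2 := hslast
            rwa [List.getLast?_eq_getLast hsne, Option.some.injEq] at h2
          have := mem_drop_length_sub_one hsne h
          rw [this, hgl]
        · exact absurd hvP (hAP v h)
      · intro p hp v hv hvP
        have hp' : p = (x, y) := by simpa using hp.symm
        subst hp'
        rw [hRdef, List.mem_append] at hv
        rcases hv with h | h
        · exact (hsmem v h).2.2
        · exact absurd hvP (hAP v h)
    case pos =>
      obtain ⟨v0, hv0A, hv0P⟩ := hAP
      have hixlt : A.findIdx (fun v => decide (v ∈ P)) < A.length :=
        List.findIdx_lt_length_of_exists ⟨v0, hv0A, by simpa using hv0P⟩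
      set ix := A.findIdx (fun v => decide (v ∈ P)) with hixdef
      set x' := A[ix]'hixlt with hx'def
      have hx'P : x' ∈ P := by
        have h := List.findIdx_getElem (p := fun v => decide (v ∈ P)) (xs := A) (w := hixlt)
        rw [hx'def]
        simpa using h
      have htk : ∀ v ∈ A.take ix, v ∉ P := by
        intro v hv
        obtain ⟨k, hk, hkv⟩ := List.mem_take_iff_getElem.1 hv
        have hk' : k < ix := by omega
        have h := List.not_of_lt_findIdx (p := fun v => decide (v ∈ P)) (xs := A)
          (i := k) (by rw [← hixdef]; exact hk')
        rw [hkv] at h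
        simpa using h
      set Q₂ := A.drop ix with hQ₂def
      have hQ₂ne : Q₂ ≠ [] := by
        apply List.ne_nil_of_length_pos
        rw [hQ₂def, List.length_drop]
        omega
      have hQ₂nd : Q₂.Nodup := hAnd.sublist (List.drop_sublist _ _)
      have hQ₂head : Q₂.head? = some x' := by
        have h0 : 0 < Q₂.length := List.length_pos_iff.2 hQ₂ne
        rw [List.head?_eq_head hQ₂ne, List.head_eq_getElem]
        congr 1
        rw [hx'def]
        simp only [hQ₂def, List.getElem_drop, Nat.add_zero]
      have hQ₂Q : Q₂ = Q.drop (iy + 1 + ix) := by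
        rw [hQ₂def, hAdef, List.drop_drop]
      have hQ₂lt : Q₂.length < Q.length := by
        rw [hQ₂Q, List.length_drop]
        omega
      have hQ₂last : Q₂.getLast? = Q.getLast? := by
        rw [hQ₂Q]
        exact getLast?_drop_of_ne_nil (by rw [← hQ₂Q]; exact hQ₂ne)
      obtain ⟨R₂, ms₂, g₂⟩ := ih Q₂ (by omega) hQ₂ne hQ₂nd (fun z hz => by
        rw [hQ₂head] at hz
        injection hz with h
        rw [← h]
        exact hx'P)
      have hR₂head : R₂.head? = some x' := g₂.rhead.trans hQ₂head
      have hR₂x'0 : R₂.idxOf x' = 0 := idxOf_head? hR₂head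
      have hmsne : ms₂.head? ≠ none := fun h => g₂.msne (List.head?_eq_none_iff.1 h)
      obtain ⟨p₂, hp₂⟩ := Option.ne_none_iff_exists'.1 hmsne
      have hp₂mem : p₂ ∈ ms₂ := List.mem_of_mem_head? (by rw [hp₂]; rfl)
      have hp₂1 : p₂.1 = x' := by
        have h := g₂.mhead
        rw [hp₂, hQ₂head] at h
        simpa using h
      have hy₂ := g₂.mmem p₂ hp₂mem
      have hy₂P : p₂.2 ∈ P := hy₂.2.2.1
      have hy₂A : p₂.2 ∈ A := by
        have h := hy₂.2.2.2.2
        rw [hQ₂def] at h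
        exact List.mem_of_mem_drop h
      have hkey : P.idxOf p₂.2 < P.idxOf x := hAmem _ hy₂A hy₂P
      have hR₂P : ∀ v ∈ R₂, v ∈ P → P.idxOf v < P.idxOf x := fun v hv hvP =>
        lt_of_le_of_lt (g₂.mbound p₂ hp₂ v hv hvP) hkey
      have hR₂mem : ∀ v ∈ R₂, v ∈ P ∨ v ∈ Q := by
        intro v hv
        rcases g₂.rmem v hv with h | h
        · exact Or.inl h
        · refine Or.inr ?_
          rw [hQ₂Q] at h
          exact List.mem_of_mem_drop h
      set Atk := A.take ix with hAtkdef
      have hAtklen : Atk.length = ix := by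
        rw [hAtkdef, List.length_take]
        omega
      have hAtknotP : ∀ v ∈ Atk, v ∉ P := htk
      have hAtknd : Atk.Nodup := hAnd.sublist (List.take_sublist _ _)
      have hAtkA : ∀ v ∈ Atk, v ∈ A := fun v hv => by
        rw [hAtkdef] at hv
        exact List.mem_of_mem_take hv
      have hAtkQ₂disj : Atk.Disjoint Q₂ := by
        have h := hAnd
        rw [← List.take_append_drop ix A] at h
        exact fun v h1 h2 => (List.nodup_append.1 h).2.2 v h1 v h2 rfl
      set R := seg P x y ++ (Atk ++ R₂) with hRdef
      have hR₂R : ∀ v ∈ R₂, v ∈ R := fun v hv => by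
        rw [hRdef]
        exact List.mem_append_right _ (List.mem_append_right _ hv)
      have hnotPseg : ∀ v, v ∈ P → P.idxOf v < P.idxOf x → v ∉ seg P x y := by
        intro v hvP hlt hin
        have := (hsmem v hin).2.1
        omega
      have hx'A : x' ∈ A := by
        rw [hx'def]
        exact List.getElem_mem hixlt
      have hx'lt : P.idxOf x' < P.idxOf x := hAmem x' hx'A hx'P
      have hx'nseg : x' ∉ seg P x y := hnotPseg x' hx'P hx'lt
      have hx'nAtk : x' ∉ Atk := fun h => hAtknotP x' h hx'P
      have hd1 : (seg P x y).Disjoint Atk := fun v hv hvA => hAtknotP v hvA (hsmem v hv).1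
      have hd2 : (seg P x y).Disjoint R₂ := by
        intro v hv hvR
        rcases g₂.rmem v hvR with h | h
        · exact (hnotPseg v h (hR₂P v hvR h)) hv
        · have hvP := (hsmem v hv).1
          have h2 := hAmem v (by rw [hQ₂def] at h; exact List.mem_of_mem_drop h) hvP
          have h3 := (hsmem v hv).2.1
          omega
      have hd3 : Atk.Disjoint R₂ := by
        intro v hv hvR
        rcases g₂.rmem v hvR with h | h
        · exact hAtknotP v hv h
        · exact hAtkQ₂disj hv h
      have hdisjPseg : (seg P x y).Disjoint (Atk ++ R₂) := by
        intro v hv hvm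
        rcases List.mem_append.1 hvm with h | h
        · exact hd1 hv h
        · exact hd2 hv h
      have hRhead : R.head? = some x := by
        rw [hRdef, List.head?_append, hshead]
        rfl
      have hRx0 : R.idxOf x = 0 := idxOf_head? hRhead
      have hRy : R.idxOf y = (seg P x y).length - 1 := by
        rw [hRdef, List.idxOf_append_of_mem hyseg, hsidxy]
      have hRx' : R.idxOf x' = (seg P x y).length + Atk.length := by
        rw [hRdef, List.idxOf_append_of_notMem hx'nseg,
          List.idxOf_append_of_notMem hx'nAtk, hR₂x'0]
        omega
      have hshiftIdx : ∀ v, v ∉ seg P x y → v ∉ Atk →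
          R.idxOf v = (seg P x y).length + Atk.length + R₂.idxOf v := by
        intro v h1 h2
        rw [hRdef, List.idxOf_append_of_notMem h1, List.idxOf_append_of_notMem h2]
        omega
      have hmark1 : ∀ m ∈ ms₂, m.1 ∉ seg P x y ∧ m.1 ∉ Atk := by
        intro m hm
        have h := g₂.mmem m hm
        have hlt := hR₂P m.1 h.2.1 h.1
        exact ⟨hnotPseg _ h.1 hlt, fun hin => hAtknotP _ hin h.1⟩
      have hmark2 : ∀ m ∈ ms₂, m.2 ∉ seg P x y ∧ m.2 ∉ Atk := by
        intro m hm
        have h := g₂.mmem m hm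
        have hlt := hR₂P m.2 h.2.2.2.1 h.2.2.1
        exact ⟨hnotPseg _ h.2.2.1 hlt, fun hin => hAtknotP _ hin h.2.2.1⟩
      have hsegshift : ∀ u v : V, u ∉ seg P x y → u ∉ Atk → v ∉ seg P x y → v ∉ Atk →
          seg R u v = seg R₂ u v := by
        intro u v h1 h2 h3 h4
        rw [hRdef, ← List.append_assoc]
        exact seg_append (fun h => (List.mem_append.1 h).elim h1 h2)
          (fun h => (List.mem_append.1 h).elim h3 h4)
      have hsegRxy : seg R x y = seg P x y := by
        rw [hRdef]
        exact seg_prepend_self hPnd hxP hyP hxyP _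
      have hgl : (seg P x y).getLast hsne = y := by
        have h2 := hslast
        rwa [List.getLast?_eq_getLast hsne, Option.some.injEq] at h2
      have hPsegsplit : seg P x y = (seg P x y).dropLast ++ [y] := by
        conv_lhs => rw [← List.dropLast_append_getLast hsne, hgl]
      have hsplitR : R = (seg P x y).dropLast ++ (y :: (Atk ++ R₂)) := by
        rw [hRdef]
        conv_lhs => rw [hPsegsplit]
        rw [List.append_assoc]
        rfl
      have hdropR : R.drop ((seg P x y).length - 1) = y :: (Atk ++ R₂) := by
        rw [hsplitR, show (seg P x y).length - 1 = (seg P x y).dropLast.length by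
          rw [List.length_dropLast], List.drop_left]
      have hsegyx' : seg R y x' = y :: (Atk ++ [x']) := by
        show ((R.drop (R.idxOf y)).take (R.idxOf x' + 1 - R.idxOf y)) = _
        rw [hRy, hRx', hdropR,
          show (seg P x y).length + Atk.length + 1 - ((seg P x y).length - 1)
            = (Atk.length + 1) + 1 by omega, List.take_succ_cons]
        congr 1
        rw [show Atk.length + 1 = Atk.length + 1 from rfl, List.take_length_add_append]
        congr 1
        obtain ⟨t₂, ht₂⟩ := eq_cons_of_head? hR₂head
        rw [ht₂]
        rfl
      have hconn : ∀ v ∈ (seg R y x').tail.dropLast, v ∉ P := by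
        rw [hsegyx']
        simp only [List.tail_cons, List.dropLast_concat]
        exact fun v hv => hAtknotP v hv
      have hiy1lt : iy + 1 < Q.length := by
        have h0 : 0 < A.length := Nat.lt_of_le_of_lt (Nat.zero_le ix) hixlt
        rw [hAdef, List.length_drop] at h0
        omega
      have hA0lt : 0 < A.length := Nat.lt_of_le_of_lt (Nat.zero_le ix) hixlt
      have hA0eq : A[0]'hA0lt = Q[iy + 1]'hiy1lt := by
        simp only [hAdef, List.getElem_drop, Nat.add_zero]
      have hheadAR : (Atk ++ R₂).head? = some (Q[iy + 1]'hiy1lt) := by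
        by_cases h0 : ix = 0
        · have hAtknil : Atk = [] := by rw [hAtkdef, h0]; exact List.take_zero
          rw [hAtknil, List.nil_append, hR₂head, hx'def]
          simp only [h0]
          rw [hA0eq]
        · have hAtkne : Atk ≠ [] := by
            apply List.ne_nil_of_length_pos
            rw [hAtklen]
            omega
          rw [List.head?_append, List.head?_eq_head hAtkne, List.head_eq_getElem]
          have h1 : Atk[0]'(List.length_pos_iff.2 hAtkne) = Q[iy + 1]'hiy1lt := by
            rw [← hA0eq]
            simp only [hAtkdef, List.getElem_take]
          rw [h1]
          rfl
      have hAtkinfix : Atk <:+: Q := by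
        rw [hAtkdef]
        exact ((List.take_prefix _ _).isInfix).trans hAinfix
      have hAtkchain : List.Chain' (fun u v => (u, v) ∈ pathEdges P ∨ (u, v) ∈ pathEdges Q)
          Atk := ((chain'_pathEdges Q).infix hAtkinfix).imp (fun a b h => Or.inr h)
      have hQ₂infix : Q₂ <:+: Q := by
        rw [hQ₂Q]
        exact (List.drop_suffix _ _).isInfix
      have hR₂chain : List.Chain' (fun u v => (u, v) ∈ pathEdges P ∨ (u, v) ∈ pathEdges Q)
          R₂ := g₂.redge.imp (fun a b h => h.imp id (fun hh => pathEdges_infix hQ₂infix hh))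
      refine ⟨R, (x, y) :: ms₂, ⟨?_, ?_, ?_, ?_, ?_, ?_, ?_, ?_, ?_, ?_, ?_, ?_, ?_⟩⟩
      · rw [hRdef]
        intro h
        exact hsne (List.append_eq_nil_iff.1 h).1
      · rw [hRdef]
        exact List.nodup_append.2 ⟨hsnd, List.nodup_append.2 ⟨hAtknd, g₂.rnd, fun _ ha _ hb hab => hd3 ha (hab ▸ hb)⟩, fun _ ha _ hb hab => hdisjPseg ha (hab ▸ hb)⟩
      · rw [hRhead, hxh]
      · have hAR₂ne : Atk ++ R₂ ≠ [] := fun h => g₂.rne (List.append_eq_nil_iff.1 h).2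
        rw [hRdef, getLast?_append_of_ne_nil hAR₂ne, getLast?_append_of_ne_nil g₂.rne,
          g₂.rlast, hQ₂last]
      · intro v hv
        rw [hRdef, List.mem_append] at hv
        rcases hv with h | h
        · exact Or.inl (hsmem v h).1
        · rcases List.mem_append.1 h with h2 | h2
          · exact Or.inr (hAQ v (hAtkA v h2))
          · exact hR₂mem v h2
      · rw [hRdef]
        refine List.isChain_append.2 ⟨hsegchain,
          List.isChain_append.2 ⟨hAtkchain, hR₂chain, ?_⟩, ?_⟩
        · intro u hu w hw
          have hAtkne : Atk ≠ [] := by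
            intro h
            rw [h] at hu
            simp at hu
          have hixpos : 0 < ix := by
            have := List.length_pos_iff.2 hAtkne
            omega
          have hu' : u = A[ix - 1]'(by omega) := by
            rw [List.getLast?_eq_getLast hAtkne, List.getLast_eq_getElem] at hu
            simp only [Option.mem_def, Option.some.injEq] at hu
            rw [← hu]
            simp only [show Atk.length - 1 = ix - 1 by rw [hAtklen]]
            simp only [hAtkdef, List.getElem_take]
          have hw' : w = x' := by
            rw [hR₂head] at hw
            simp only [Option.mem_def, Option.some.injEq] at hw
            exact hw.symm
          rw [hu', hw', hx'def]
          refine Or.inr ?_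
          have hedge := pathEdges_getElem A (ix - 1) (by omega)
          have hidx : ix - 1 + 1 = ix := by omega
          simp only [hidx] at hedge
          exact pathEdges_infix hAinfix hedge
        · intro u hu w hw
          have hu' : u = y := by
            rw [hslast] at hu
            simp only [Option.mem_def, Option.some.injEq] at hu
            exact hu.symm
          have hw' : w = Q[iy + 1]'hiy1lt := by
            rw [hheadAR] at hw
            simp only [Option.mem_def, Option.some.injEq] at hw
            exact hw.symm
          rw [hu', hw']
          exact Or.inr (hjunc hiy1lt)
      · simp
      · simpa using hxh.symm
      · intro m hm
        rcases List.mem_cons.1 hm with h | hm₂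
        · subst h
          refine ⟨hxP, ?_, hyP, ?_, hyQ⟩
          · rw [hRdef]; exact List.mem_append_left _ hxseg
          · rw [hRdef]; exact List.mem_append_left _ hyseg
        · have h := g₂.mmem m hm₂
          refine ⟨h.1, hR₂R _ h.2.1, h.2.2.1, hR₂R _ h.2.2.2.1, ?_⟩
          have h2 := h.2.2.2.2
          rw [hQ₂Q] at h2
          exact List.mem_of_mem_drop h2
      · intro m hm
        rcases List.mem_cons.1 hm with h | hm₂
        · subst h
          refine ⟨hxyP, ?_, hsegRxy.symm⟩
          rw [hRx0]
          exact Nat.zero_le _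
        · have h := g₂.mono m hm₂
          have h1m := hmark1 m hm₂
          have h2m := hmark2 m hm₂
          refine ⟨h.1, ?_, ?_⟩
          · rw [hshiftIdx _ h1m.1 h1m.2, hshiftIdx _ h2m.1 h2m.2]
            have := h.2.1
            omega
          · rw [hsegshift _ _ h1m.1 h1m.2 h2m.1 h2m.2]
            exact h.2.2
      · refine List.isChain_cons.2 ⟨?_, ?_⟩
        · intro q hq
          have hq' : q = p₂ := by
            rw [hp₂] at hq
            simp only [Option.mem_def, Option.some.injEq] at hq
            exact hq.symm
          subst hq'
          refine ⟨hkey, ?_, ?_⟩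
          · rw [hp₂1, hRy, hRx']
            omega
          · rw [hp₂1]
            exact hconn
        · refine chain'_imp_mem ?_ g₂.mchain
          intro p hp q hq hrel
          have hp2 := hmark2 p hp
          have hq1 := hmark1 q hq
          refine ⟨hrel.1, ?_, ?_⟩
          · rw [hshiftIdx _ hp2.1 hp2.2, hshiftIdx _ hq1.1 hq1.2]
            have := hrel.2.1
            omega
          · rw [hsegshift _ _ hp2.1 hp2.2 hq1.1 hq1.2]
            exact hrel.2.2
      · intro p hp v hv hvP
        have hgltl : ((x, y) :: ms₂).getLast? = ms₂.getLast? := by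
          rw [show (x, y) :: ms₂ = [(x, y)] ++ ms₂ from rfl,
            getLast?_append_of_ne_nil g₂.msne]
        rw [hgltl] at hp
        have hpmem : p ∈ ms₂ := List.mem_of_mem_getLast? (by rw [hp]; rfl)
        have h2m := hmark2 p hpmem
        rw [hshiftIdx _ h2m.1 h2m.2] at hv
        have hv₂ : v ∈ R₂.drop (R₂.idxOf p.2) := by
          rw [hRdef, ← List.append_assoc,
            show (seg P x y).length + Atk.length + R₂.idxOf p.2
              = (seg P x y ++ Atk).length + R₂.idxOf p.2 by
                rw [List.length_append], List.drop_length_add_append] at hv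
          exact hv
        exact g₂.mtail p hp v hv₂ hvP
      · intro p hp v hv hvP
        have hp' : p = (x, y) := by simpa using hp.symm
        subst hp'
        rw [hRdef, List.mem_append] at hv
        rcases hv with h | h
        · exact (hsmem v h).2.2
        · rcases List.mem_append.1 h with h2 | h2
          · exact absurd hvP (hAtknotP v h2)
          · have h4 := hR₂P v h2 hvP
            show P.idxOf v ≤ P.idxOf y
            omega

end LacedMain

/-- For every directed path `P` and every directed `a`–`b` path `Q` in a
directed graph `D` there is a directed `a`–`b` path `Q' ⊆ P ∪ Q` such that `P` and `Q'`
are laced. -/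
theorem exists_laced_path {V : Type*} [DecidableEq V] (D : DiGraph V) (a b : V)
    (P Q : List V) (hP : IsPathList D P) (hQ : IsPathFrom D Q a b) :
    ∃ Q' : List V, IsPathFrom D Q' a b ∧
      IsSubgraph (pathGraph Q') (pathGraph P ∪ pathGraph Q) ∧
      Laced P Q' := by
  obtain ⟨hPne, hPnd, hPv, hPc⟩ := hP
  obtain ⟨⟨hQne, hQnd, hQv, hQc⟩, hQh, hQl⟩ := hQ
  have hPE : ∀ u v : V, (u, v) ∈ pathEdges P → (u, v) ∈ D.edges := fun u v h =>
    chain'_rel_of_pathEdges hPc h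
  have hQE : ∀ u v : V, (u, v) ∈ pathEdges Q → (u, v) ∈ D.edges := fun u v h =>
    chain'_rel_of_pathEdges hQc h
  by_cases hPQ : ∃ v ∈ Q, v ∈ P
  case neg =>
    refine ⟨Q, ⟨⟨hQne, hQnd, hQv, hQc⟩, hQh, hQl⟩, ⟨?_, ?_, ?_⟩, Or.inl ?_⟩
    · intro v hv
      exact Or.inr hv
    · intro e he
      exact Or.inr he
    · intro e he
      exact mem_of_pathEdges he
    · intro v hvP hvQ
      exact hPQ ⟨v, hvQ, hvP⟩
  case pos =>
    obtain ⟨w0, hw0Q, hw0P⟩ := hPQ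
    have hQ0 : 0 < Q.length := List.length_pos_iff.2 hQne
    have ha0 : Q[0]'hQ0 = a := by
      rw [List.head?_eq_getElem?, List.getElem?_eq_getElem hQ0] at hQh
      exact Option.some.inj hQh
    have hfound : Q.findIdx (fun v => decide (v ∈ P)) < Q.length :=
      List.findIdx_lt_length_of_exists ⟨w0, hw0Q, by simpa using hw0P⟩
    set i₀ := Q.findIdx (fun v => decide (v ∈ P)) with hi₀def
    set x₀ := Q[i₀]'hfound with hx₀def
    have hx₀P : x₀ ∈ P := by
      have h := List.findIdx_getElem (p := fun v => decide (v ∈ P)) (xs := Q) (w := hfound)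
      rw [hx₀def]
      simpa using h
    have hA₀notP : ∀ v ∈ Q.take i₀, v ∉ P := by
      intro v hv
      obtain ⟨k, hk, hkv⟩ := List.mem_take_iff_getElem.1 hv
      have h := List.not_of_lt_findIdx (p := fun v => decide (v ∈ P)) (xs := Q)
        (i := k) (by rw [← hi₀def]; omega)
      rw [hkv] at h
      simpa using h
    set Qs := Q.drop i₀ with hQsdef
    have hQsne : Qs ≠ [] := by
      apply List.ne_nil_of_length_pos
      rw [hQsdef, List.length_drop]
      omega
    have hQsnd : Qs.Nodup := hQnd.sublist (List.drop_sublist _ _)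
    have hQshead : Qs.head? = some x₀ := by
      rw [List.head?_eq_head hQsne, List.head_eq_getElem]
      congr 1
      rw [hx₀def]
      simp only [hQsdef, List.getElem_drop, Nat.add_zero]
    have hQslast : Qs.getLast? = Q.getLast? := by
      rw [hQsdef]
      exact getLast?_drop_of_ne_nil (by rw [← hQsdef]; exact hQsne)
    obtain ⟨R, ms, g⟩ := exists_CGood P hPnd Qs.length Qs le_rfl hQsne hQsnd (fun z hz => by
      rw [hQshead] at hz
      injection hz with h
      rw [← h]
      exact hx₀P)
    set A₀ := Q.take i₀ with hA₀def
    set Q' := A₀ ++ R with hQ'def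
    have hRhead : R.head? = some x₀ := g.rhead.trans hQshead
    have hRx₀0 : R.idxOf x₀ = 0 := idxOf_head? hRhead
    have hRmemQ : ∀ v ∈ R, v ∈ P ∨ v ∈ Q := by
      intro v hv
      rcases g.rmem v hv with h | h
      · exact Or.inl h
      · refine Or.inr ?_
        rw [hQsdef] at h
        exact List.mem_of_mem_drop h
    have hA₀Qs : A₀.Disjoint Qs := by
      have h := hQnd
      rw [← List.take_append_drop i₀ Q] at h
      exact fun v h1 h2 => (List.nodup_append.1 h).2.2 v h1 v h2 rfl
    have hA₀R : A₀.Disjoint R := by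
      intro v hv hvR
      rcases g.rmem v hvR with h | h
      · exact hA₀notP v hv h
      · exact hA₀Qs hv h
    have hmnotA : ∀ m ∈ ms, m.1 ∉ A₀ ∧ m.2 ∉ A₀ := by
      intro m hm
      have h := g.mmem m hm
      exact ⟨fun hin => hA₀notP _ hin h.1, fun hin => hA₀notP _ hin h.2.2.1⟩
    have hshift : ∀ v, v ∉ A₀ → Q'.idxOf v = A₀.length + R.idxOf v := by
      intro v hv
      rw [hQ'def]
      exact List.idxOf_append_of_notMem hv
    have hsegsh : ∀ u v : V, u ∉ A₀ → v ∉ A₀ → seg Q' u v = seg R u v := by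
      intro u v h1 h2
      rw [hQ'def]
      exact seg_append h1 h2
    have hQ'chain : List.Chain' (fun u v => (u, v) ∈ pathEdges P ∨ (u, v) ∈ pathEdges Q)
        Q' := by
      rw [hQ'def]
      refine List.isChain_append.2 ⟨?_, ?_, ?_⟩
      · exact ((chain'_pathEdges Q).infix
          (by rw [hA₀def]; exact (List.take_prefix _ _).isInfix)).imp
          (fun u v h => Or.inr h)
      · exact g.redge.imp (fun u v h => h.imp id (fun hh =>
          pathEdges_infix (by rw [hQsdef]; exact (List.drop_suffix _ _).isInfix) hh))
      · intro u hu w hw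
        have hA₀ne : A₀ ≠ [] := by
          intro h
          rw [h] at hu
          simp at hu
        have hi₀pos : 0 < i₀ := by
          have h2 := List.length_pos_iff.2 hA₀ne
          rw [hA₀def, List.length_take] at h2
          omega
        have hA₀len : A₀.length = i₀ := by
          rw [hA₀def, List.length_take]
          omega
        have hu' : u = Q[i₀ - 1]'(by omega) := by
          rw [List.getLast?_eq_getLast hA₀ne, List.getLast_eq_getElem] at hu
          simp only [Option.mem_def, Option.some.injEq] at hu
          rw [← hu]
          simp only [show A₀.length - 1 = i₀ - 1 by rw [hA₀len]]
          simp only [hA₀def, List.getElem_take]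
        have hw' : w = x₀ := by
          rw [hRhead] at hw
          simp only [Option.mem_def, Option.some.injEq] at hw
          exact hw.symm
        rw [hu', hw', hx₀def]
        refine Or.inr ?_
        have hedge := pathEdges_getElem Q (i₀ - 1) (by omega)
        have hidx : i₀ - 1 + 1 = i₀ := by omega
        simp only [hidx] at hedge
        exact hedge
    have hQ'head : Q'.head? = some a := by
      by_cases h0 : i₀ = 0
      · have hA₀nil : A₀ = [] := by rw [hA₀def, h0]; exact List.take_zero
        rw [hQ'def, hA₀nil, List.nil_append, hRhead, hx₀def]
        simp only [h0]
        rw [ha0]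
      · have hA₀ne : A₀ ≠ [] := by
          apply List.ne_nil_of_length_pos
          rw [hA₀def, List.length_take]
          omega
        rw [hQ'def, List.head?_append, List.head?_eq_head hA₀ne, List.head_eq_getElem]
        have h1 : A₀[0]'(List.length_pos_iff.2 hA₀ne) = a := by
          simp only [hA₀def, List.getElem_take]
          exact ha0
        rw [h1]
        rfl
    have hQ'last : Q'.getLast? = some b := by
      rw [hQ'def, getLast?_append_of_ne_nil g.rne, g.rlast, hQslast, hQl]
    have hQ'nd : Q'.Nodup := by
      rw [hQ'def]
      exact List.nodup_append.2 ⟨hQnd.sublist (List.take_sublist _ _), g.rnd, fun _ ha _ hb hab => hA₀R ha (hab ▸ hb)⟩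
    have hQ'ne : Q' ≠ [] := by
      rw [hQ'def]
      intro h
      exact g.rne (List.append_eq_nil_iff.1 h).2
    have hQ'mem : ∀ v ∈ Q', v ∈ P ∨ v ∈ Q := by
      intro v hv
      rw [hQ'def, List.mem_append] at hv
      rcases hv with h | h
      · exact Or.inr (by rw [hA₀def] at h; exact List.mem_of_mem_take h)
      · exact hRmemQ v h
    have hQ'edges : ∀ e, e ∈ pathEdges Q' → e ∈ pathEdges P ∨ e ∈ pathEdges Q := by
      intro e he
      obtain ⟨u, v⟩ := e
      exact chain'_rel_of_pathEdges hQ'chain he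
    refine ⟨Q', ⟨⟨hQ'ne, hQ'nd, ?_, ?_⟩, hQ'head, hQ'last⟩, ⟨?_, ?_, ?_⟩, ?_⟩
    · intro v hv
      rcases hQ'mem v hv with h | h
      · exact hPv v h
      · exact hQv v h
    · exact hQ'chain.imp (fun u v h => h.elim (hPE u v) (hQE u v))
    · intro v hv
      exact hQ'mem v hv
    · intro e he
      exact hQ'edges e he
    · intro e he
      exact mem_of_pathEdges he
    · refine laced_of_marks P Q' ms g.msne ?_ ?_ ?_ ?_ ?_
      · intro m hm
        have h := g.mmem m hm
        exact ⟨h.1, by rw [hQ'def]; exact List.mem_append_right _ h.2.1, h.2.2.1,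
          by rw [hQ'def]; exact List.mem_append_right _ h.2.2.2.1⟩
      · intro m hm
        have h := g.mono m hm
        have hna := hmnotA m hm
        refine ⟨h.1, ?_, ?_⟩
        · rw [hshift _ hna.1, hshift _ hna.2]
          have := h.2.1
          omega
        · rw [hsegsh _ _ hna.1 hna.2]
          exact h.2.2
      · refine chain'_imp_mem ?_ g.mchain
        intro p hp q hq hrel
        have hpna := hmnotA p hp
        have hqna := hmnotA q hq
        refine ⟨hrel.1, ?_, ?_⟩
        · rw [hshift _ hpna.2, hshift _ hqna.1]
          have := hrel.2.1
          omega
        · rw [hsegsh _ _ hpna.2 hqna.1]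
          exact hrel.2.2
      · intro p hp v hv hvP
        have hp1 : p.1 = x₀ := by
          have h := g.mhead
          rw [hp, hQshead] at h
          simpa using h
        have hp1nA : p.1 ∉ A₀ := (hmnotA p (List.mem_of_mem_head? (by rw [hp]; rfl))).1
        rw [hshift _ hp1nA, hp1, hRx₀0] at hv
        rw [hQ'def, show A₀.length + 0 + 1 = A₀.length + 1 by omega,
          List.take_length_add_append] at hv
        rcases List.mem_append.1 hv with h | h
        · exact absurd hvP (hA₀notP v h)
        · obtain ⟨t, ht⟩ := eq_cons_of_head? hRhead
          rw [ht] at h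
          simp only [List.take_succ_cons, List.take_zero, List.mem_singleton] at h
          rw [h, hp1]
      · intro p hp v hv hvP
        have hp2nA : p.2 ∉ A₀ := (hmnotA p (List.mem_of_mem_getLast? (by rw [hp]; rfl))).2
        rw [hshift _ hp2nA, hQ'def, List.drop_length_add_append] at hv
        exact g.mtail p hp v hv hvP
end

section
/- Let U be a set of vertices of a finite strongly connected directed graph D that is edge-minimal with the property of being strongly connected and containing U; precisely, assume that for every edge e of D there exist vertices u ≠ v ∈ U such that every directed u–v path in D contains e. Let A be a strongly connected subgraph of D. Then for every edge e of D with tail in V(A) and head in V(D) ∖ V(A), there exists v ∈ U for which there is no directed A–v path in D − e. -/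
set_option autoImplicit false

open DiGraph

variable {V : Type*}

section AuxStatement9

variable {V : Type*}

private lemma chain'_pairs_aux9 {R : V → V → Prop} :
    ∀ {l : List V}, List.Chain' R l → ∀ p ∈ l.zip l.tail, R p.1 p.2 := by
  intro l
  induction l with
  | nil => intro _ p hp; simp at hp
  | cons a t ih =>
    intro h p hp
    cases t with
    | nil => simp at hp
    | cons b t' =>
      rw [List.Chain', List.isChain_cons_cons] at h
      simp only [List.tail_cons, List.zip_cons_cons, List.mem_cons] at hp
      rcases hp with rfl | hp
      · exact h.1
      · exact ih h.2 p hp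

private lemma exists_dup_split_aux9 : ∀ {l : List V}, ¬ l.Nodup →
    ∃ (x : V) (l₁ l₂ l₃ : List V), l = l₁ ++ x :: (l₂ ++ x :: l₃) := by
  intro l
  induction l with
  | nil => intro h; exact absurd List.nodup_nil h
  | cons a t ih =>
    intro h
    by_cases ha : a ∈ t
    · obtain ⟨s, t', rfl⟩ := List.append_of_mem ha
      exact ⟨a, [], s, t', by simp⟩
    · have ht : ¬ t.Nodup := fun hn => h (List.nodup_cons.mpr ⟨ha, hn⟩)
      obtain ⟨x, l₁, l₂, l₃, rfl⟩ := ih ht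
      exact ⟨x, a :: l₁, l₂, l₃, rfl⟩

private lemma walk_to_reaches_aux9 (G : DiGraph V) :
    ∀ (n : ℕ) (l : List V), l.length ≤ n → l ≠ [] → (∀ v ∈ l, v ∈ G.verts) →
      List.Chain' (fun a b => (a, b) ∈ G.edges) l →
      ∀ a b, l.head? = some a → l.getLast? = some b → Reaches G a b := by
  intro n
  induction n with
  | zero =>
    intro l hl hne
    exact absurd (List.length_eq_zero_iff.mp (Nat.le_zero.mp hl)) hne
  | succ n ih =>
    intro l hl hne hv hc a b ha hb
    by_cases hd : l.Nodup
    · exact ⟨l, ⟨hne, hd, hv, hc⟩, ha, hb⟩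
    · obtain ⟨x, l₁, l₂, l₃, rfl⟩ := exists_dup_split_aux9 hd
      have hsplit : l₁ ++ x :: (l₂ ++ x :: l₃) = (l₁ ++ x :: l₂) ++ (x :: l₃) := by simp
      apply ih (l₁ ++ x :: l₃)
      · have h1 : (l₁ ++ x :: (l₂ ++ x :: l₃)).length ≤ n + 1 := hl
        simp only [List.length_append, List.length_cons] at h1 ⊢
        omega
      · simp
      · intro w hw
        apply hv
        simp only [List.mem_append, List.mem_cons] at hw ⊢
        tauto
      · rw [List.Chain', List.isChain_append] at hc ⊢
        refine ⟨hc.1, ?_, ?_⟩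
        · have h2 : List.Chain' (fun a b => (a, b) ∈ G.edges) ((x :: l₂) ++ (x :: l₃)) := by
            simpa [List.Chain'] using hc.2.1
          exact (List.isChain_append.mp h2).2.1
        · intro p hp y hy
          apply hc.2.2 p hp
          simp only [List.head?_cons, Option.mem_def, Option.some.injEq] at hy ⊢
          exact hy
      · rw [List.head?_append] at ha ⊢
        cases hh : l₁.head? with
        | none =>
          rw [hh] at ha
          simpa using ha
        | some z =>
          rw [hh] at ha
          simpa using ha
      · rw [hsplit, List.getLast?_append] at hb
        rw [List.getLast?_append]
        cases hxl : (x :: l₃).getLast? with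
        | none => simp at hxl
        | some z =>
          rw [hxl] at hb
          exact hb

private lemma reaches_trans_aux9 (G : DiGraph V) {a b c : V} :
    Reaches G a b → Reaches G b c → Reaches G a c := by
  rintro ⟨l₁, ⟨hne₁, hnd₁, hv₁, hc₁⟩, ha₁, hb₁⟩ ⟨l₂, ⟨hne₂, hnd₂, hv₂, hc₂⟩, ha₂, hb₂⟩
  cases l₂ with
  | nil => exact absurd rfl hne₂
  | cons p t =>
    have hpb : b = p := by simpa using ha₂.symm
    subst hpb
    apply walk_to_reaches_aux9 G (l₁ ++ t).length (l₁ ++ t) le_rfl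
    · intro h
      exact hne₁ (List.append_eq_nil_iff.mp h).1
    · intro w hw
      rcases List.mem_append.mp hw with h | h
      · exact hv₁ w h
      · exact hv₂ w (List.mem_cons_of_mem _ h)
    · rw [List.Chain', List.isChain_append]
      refine ⟨hc₁, (List.isChain_cons.mp hc₂).2, ?_⟩
      intro x hx y hy
      obtain rfl : b = x := by
        simp only [hb₁, Option.mem_def, Option.some.injEq] at hx
        exact hx
      exact (List.isChain_cons.mp hc₂).1 y hy
    · rw [List.head?_append, ha₁]
      rfl
    · cases t with
      | nil =>
        have hbc : b = c := by simpa using hb₂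
        rw [hbc] at hb₁
        simpa using hb₁
      | cons q t' =>
        rw [List.getLast?_append]
        rw [List.getLast?_cons_cons] at hb₂
        rw [hb₂]
        rfl

end AuxStatement9

/-- If `D` is strongly connected and edge-minimal with the property of
being strongly connected and containing `U`, and `A` is a strongly connected subgraph of
`D`, then for every edge `e` with tail in `V(A)` and head outside `V(A)` there is some
`v ∈ U` with no directed `A`–`v` path in `D − e`. -/
theorem no_AU_path_after_edge_deletion {V : Type*} (D : DiGraph V) (U : Set V)
    (hWF : D.WF) (hfin : D.verts.Finite) (hSC : StronglyConnected D)
    (hU : U ⊆ D.verts)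
    (hmin : ∀ e ∈ D.edges, ∃ u ∈ U, ∃ v ∈ U, u ≠ v ∧
      ∀ l : List V, IsPathFrom D l u v → e ∈ l.zip l.tail)
    (A : DiGraph V) (hA : IsSubgraph A D) (hAsc : StronglyConnected A) :
    ∀ e ∈ D.edges, e.1 ∈ A.verts → e.2 ∉ A.verts →
      ∃ v ∈ U, ¬ ∃ l : List V, IsXYPathList (D.deleteEdge e) A.verts {v} l := by
  intro e he hx hy
  obtain ⟨u, hu, v, hv, huv, hpath⟩ := hmin e he
  refine ⟨v, hv, ?_⟩
  rintro ⟨l, hlPath, hhead, hlast, -⟩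
  have hlne : l ≠ [] := hlPath.1
  set a := l.head hlne with ha_def
  have ha : l.head? = some a := List.head?_eq_head hlne
  have haA : a ∈ A.verts := hhead a ha
  have hbv : l.getLast? = some v := by
    rw [List.getLast?_eq_getLast hlne]
    have := hlast (l.getLast hlne) (List.getLast?_eq_getLast hlne)
    rw [Set.mem_singleton_iff] at this
    rw [this]
  -- Step 1 : a path from u to e.1 in D avoids e, since e.1 occurs only at its end
  have R1 : Reaches (D.deleteEdge e) u e.1 := by
    obtain ⟨q, ⟨hqne, hqnd, hqv, hqc⟩, hqh, hql⟩ := hSC u (hU hu) e.1 (hWF e he).1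
    refine ⟨q, ⟨hqne, hqnd, hqv, ?_⟩, hqh, hql⟩
    rw [List.Chain', List.isChain_iff_getElem] at hqc ⊢
    intro i hi
    refine ⟨hqc i hi, fun hmem => ?_⟩
    rw [Set.mem_singleton_iff] at hmem
    have hq1 : q.get ⟨i, by omega⟩ = e.1 := by
      have := congrArg Prod.fst hmem
      simpa using this
    have hlastq : q.get ⟨q.length - 1, by
        have : 0 < q.length := List.length_pos_iff.mpr hqne
        omega⟩ = e.1 := by
      rw [List.get_eq_getElem, ← List.getLast_eq_getElem hqne]
      rw [List.getLast?_eq_getLast hqne] at hql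
      exact Option.some_inj.mp hql
    have : (⟨i, by omega⟩ : Fin q.length) = ⟨q.length - 1, by
        have : 0 < q.length := List.length_pos_iff.mpr hqne
        omega⟩ := by
      rw [← hqnd.get_inj_iff]
      rw [hq1, hlastq]
    have hi' : i = q.length - 1 := by
      simpa using congrArg Fin.val this
    omega
  -- Step 2 : a path from e.1 to a inside A avoids e, since all heads of A-edges lie in A
  have R2 : Reaches (D.deleteEdge e) e.1 a := by
    obtain ⟨r, ⟨h1, h2, h3, h4⟩, h5, h6⟩ := hAsc e.1 hx a haA
    refine ⟨r, ⟨h1, h2, fun w hw => hA.1 (h3 w hw), ?_⟩, h5, h6⟩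
    refine (show List.IsChain _ _ from h4).imp fun p q hpq => ⟨hA.2.1 hpq, fun hmem => ?_⟩
    rw [Set.mem_singleton_iff] at hmem
    have h7 : q ∈ A.verts := (hA.2.2 (p, q) hpq).2
    have h8 : q = e.2 := congrArg Prod.snd hmem
    rw [h8] at h7
    exact hy h7
  -- Step 3 : the A–v path itself lies in D − e
  have R3 : Reaches (D.deleteEdge e) a v := ⟨l, hlPath, ha, hbv⟩
  -- Concatenate to a u–v path in D − e, contradicting the minimality property
  obtain ⟨w, ⟨hwne, hwnd, hwv, hwc⟩, hwh, hwl⟩ :=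
    reaches_trans_aux9 _ R1 (reaches_trans_aux9 _ R2 R3)
  have hwD : IsPathFrom D w u v :=
    ⟨⟨hwne, hwnd, hwv, (show List.IsChain _ _ from hwc).imp fun p q h => h.1⟩, hwh, hwl⟩
  have hez := hpath w hwD
  have := chain'_pairs_aux9 hwc e hez
  exact this.2 rfl
end

section
/- Let (C_j)_{j∈[p]} be a sequence of directed cycles such that for every j ≠ k the intersection C_j ∩ C_k is a directed path if |j−k| = 1 and empty otherwise. Then for every k ∈ [p−1] there exist an in-arborescence T^in ⊆ ⋃_{j∈[p]} C_j and an out-arborescence T^out ⊆ ⋃_{j∈[p]} C_j that intersect only in their common root, such that ⋃_{i∈[p]∖[k]} V(C_i) ⊆ V(T^in) and ⋃_{i∈[k]} V(C_i) ∖ V(C_{k+1}) ⊆ V(T^out). -/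
set_option autoImplicit false

open DiGraph

variable {V : Type*}

section CycleAux

open List

variable {V : Type*} [DecidableEq V]

/-- successor of `v` on the cycle given by list `l`. -/
def csucc (l : List V) (v : V) : V :=
  l.getD ((l.idxOf v + 1) % l.length) v

/-- predecessor of `v` on the cycle given by list `l`. -/
def cpred (l : List V) (v : V) : V :=
  l.getD ((l.idxOf v + (l.length - 1)) % l.length) v

lemma csucc_getElem {l : List V} (hnd : l.Nodup) {i : ℕ} (h : i < l.length) :
    csucc l l[i] = l[(i + 1) % l.length]'(Nat.mod_lt _ (Nat.zero_lt_of_lt h)) := by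
  unfold csucc
  rw [hnd.idxOf_getElem, List.getD_eq_getElem]

lemma cpred_getElem {l : List V} (hnd : l.Nodup) {i : ℕ} (h : i < l.length) :
    cpred l l[i] = l[(i + (l.length - 1)) % l.length]'(Nat.mod_lt _ (Nat.zero_lt_of_lt h)) := by
  unfold cpred
  rw [hnd.idxOf_getElem, List.getD_eq_getElem]

lemma csucc_mem {l : List V} {v : V} (hv : v ∈ l) : csucc l v ∈ l := by
  unfold csucc
  have hpos : 0 < l.length := List.length_pos_iff.2 (List.ne_nil_of_mem hv)
  rw [List.getD_eq_getElem _ _ (Nat.mod_lt _ hpos)]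
  exact List.getElem_mem _

lemma cpred_mem {l : List V} {v : V} (hv : v ∈ l) : cpred l v ∈ l := by
  unfold cpred
  have hpos : 0 < l.length := List.length_pos_iff.2 (List.ne_nil_of_mem hv)
  rw [List.getD_eq_getElem _ _ (Nat.mod_lt _ hpos)]
  exact List.getElem_mem _

lemma csucc_edge {l : List V} {v : V} (hv : v ∈ l) : (v, csucc l v) ∈ cycleEdges l := by
  have hlt : l.idxOf v < l.length := List.idxOf_lt_length_iff.2 hv
  refine ⟨⟨l.idxOf v, hlt⟩, ?_, ?_⟩
  · simp [List.get_eq_getElem]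
  · simp only [List.get_eq_getElem]
    unfold csucc
    rw [List.getD_eq_getElem _ _ (Nat.mod_lt _ (Nat.zero_lt_of_lt hlt))]

lemma cpred_edge {l : List V} {v : V} (hv : v ∈ l) : (cpred l v, v) ∈ cycleEdges l := by
  have hlt : l.idxOf v < l.length := List.idxOf_lt_length_iff.2 hv
  have hpos : 0 < l.length := Nat.zero_lt_of_lt hlt
  refine ⟨⟨(l.idxOf v + (l.length - 1)) % l.length, Nat.mod_lt _ hpos⟩, ?_, ?_⟩
  · simp only [List.get_eq_getElem]
    unfold cpred
    rw [List.getD_eq_getElem _ _ (Nat.mod_lt _ hpos)]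
  · simp only [List.get_eq_getElem]
    have : ((l.idxOf v + (l.length - 1)) % l.length + 1) % l.length = l.idxOf v := by
      rw [Nat.mod_add_mod]
      have h1 : l.idxOf v + (l.length - 1) + 1 = l.idxOf v + l.length := by omega
      rw [h1, Nat.add_mod_right, Nat.mod_eq_of_lt hlt]
    simp only [this]
    exact List.getElem_idxOf hlt

lemma edge_snd_eq {l : List V} (hnd : l.Nodup) {u v : V} (h : (u, v) ∈ cycleEdges l) :
    u ∈ l ∧ v = csucc l u := by
  obtain ⟨i, h1, h2⟩ := h
  simp only [List.get_eq_getElem] at h1 h2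
  subst h1
  constructor
  · exact List.getElem_mem _
  · rw [csucc_getElem hnd i.isLt]
    exact h2.symm

lemma csucc_cpred {l : List V} (hnd : l.Nodup) {v : V} (hv : v ∈ l) :
    csucc l (cpred l v) = v := by
  have hlt : l.idxOf v < l.length := List.idxOf_lt_length_iff.2 hv
  have hpos : 0 < l.length := Nat.zero_lt_of_lt hlt
  conv_lhs => rw [← List.getElem_idxOf hlt]
  rw [cpred_getElem hnd hlt, csucc_getElem hnd (Nat.mod_lt _ hpos)]
  have : ((l.idxOf v + (l.length - 1)) % l.length + 1) % l.length = l.idxOf v := by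
    rw [Nat.mod_add_mod]
    have h1 : l.idxOf v + (l.length - 1) + 1 = l.idxOf v + l.length := by omega
    rw [h1, Nat.add_mod_right, Nat.mod_eq_of_lt hlt]
  simp only [this]
  exact List.getElem_idxOf hlt

lemma cpred_csucc {l : List V} (hnd : l.Nodup) {v : V} (hv : v ∈ l) :
    cpred l (csucc l v) = v := by
  have hlt : l.idxOf v < l.length := List.idxOf_lt_length_iff.2 hv
  have hpos : 0 < l.length := Nat.zero_lt_of_lt hlt
  conv_lhs => rw [← List.getElem_idxOf hlt]
  rw [csucc_getElem hnd hlt, cpred_getElem hnd (Nat.mod_lt _ hpos)]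
  have : ((l.idxOf v + 1) % l.length + (l.length - 1)) % l.length = l.idxOf v := by
    rw [Nat.mod_add_mod]
    have h1 : l.idxOf v + 1 + (l.length - 1) = l.idxOf v + l.length := by omega
    rw [h1, Nat.add_mod_right, Nat.mod_eq_of_lt hlt]
  simp only [this]
  exact List.getElem_idxOf hlt

lemma csucc_ne {l : List V} (hnd : l.Nodup) (h2 : 2 ≤ l.length) {v : V} (hv : v ∈ l) :
    csucc l v ≠ v := by
  obtain ⟨⟨i, hi⟩, rfl⟩ := List.mem_iff_get.1 hv
  simp only [List.get_eq_getElem]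
  rw [csucc_getElem hnd hi]
  intro h
  have h2' := (hnd.getElem_inj_iff).1 h
  rcases Nat.lt_or_ge (i + 1) l.length with hc | hc
  · rw [Nat.mod_eq_of_lt hc] at h2'; omega
  · have he : i + 1 = l.length := by omega
    rw [he, Nat.mod_self] at h2'; omega

lemma cpred_ne {l : List V} (hnd : l.Nodup) (h2 : 2 ≤ l.length) {v : V} (hv : v ∈ l) :
    cpred l v ≠ v := by
  intro h
  have := csucc_cpred hnd hv
  rw [h] at this
  exact csucc_ne hnd h2 hv this

lemma csucc_iterate_getElem {l : List V} (hnd : l.Nodup) {i : ℕ} (h : i < l.length) :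
    ∀ j : ℕ, (csucc l)^[j] l[i] = l[(i + j) % l.length]'(Nat.mod_lt _ (Nat.zero_lt_of_lt h)) := by
  intro j
  induction j with
  | zero => simp [Nat.mod_eq_of_lt h]
  | succ j ih =>
    rw [Function.iterate_succ_apply', ih, csucc_getElem hnd (Nat.mod_lt _ (Nat.zero_lt_of_lt h))]
    congr 1
    rw [Nat.mod_add_mod, Nat.add_assoc]

lemma csucc_orbit {l : List V} (hnd : l.Nodup) {u w : V} (hu : u ∈ l) (hw : w ∈ l) :
    ∃ i, (csucc l)^[i] u = w := by
  obtain ⟨⟨a, ha⟩, rfl⟩ := List.mem_iff_get.1 hu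
  obtain ⟨⟨b, hb⟩, rfl⟩ := List.mem_iff_get.1 hw
  simp only [List.get_eq_getElem]
  refine ⟨l.length + b - a, ?_⟩
  rw [csucc_iterate_getElem hnd ha]
  have h1 : (a + (l.length + b - a)) % l.length = b := by
    have : a + (l.length + b - a) = b + l.length := by omega
    rw [this, Nat.add_mod_right, Nat.mod_eq_of_lt hb]
  simp only [h1]

lemma iterate_inverse {f g : V → V} {s : Set V} (hfg : ∀ x ∈ s, f (g x) = x)
    (hg : ∀ x ∈ s, g x ∈ s) : ∀ i, ∀ x ∈ s, f^[i] (g^[i] x) = x := by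
  intro i
  induction i with
  | zero => intro x _; rfl
  | succ i ih =>
    intro x hx
    rw [Function.iterate_succ_apply g, Function.iterate_succ_apply' f]
    rw [ih (g x) (hg x hx), hfg x hx]

lemma cpred_orbit {l : List V} (hnd : l.Nodup) {u w : V} (hu : u ∈ l) (hw : w ∈ l) :
    ∃ i, (cpred l)^[i] u = w := by
  obtain ⟨i, hi⟩ := csucc_orbit hnd hw hu
  refine ⟨i, ?_⟩
  rw [← hi]
  exact iterate_inverse (fun x hx => cpred_csucc hnd hx) (fun x hx => csucc_mem hx) i w hw

end CycleAux
section ReachAux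

variable {V : Type*}

set_option linter.unusedSectionVars false

lemma iterate_list_path (D : DiGraph V) (r : V) (f : V → V)
    (hf : ∀ v ∈ D.verts, v ≠ r → f v ∈ D.verts ∧ (v, f v) ∈ D.edges)
    (v : V) (hv : v ∈ D.verts) (hn : ∃ n, f^[n] v = r) :
    ∃ (n : ℕ) (L : List V), L = (List.range (n + 1)).map (fun i => f^[i] v) ∧
      L ≠ [] ∧ L.Nodup ∧ (∀ x ∈ L, x ∈ D.verts) ∧
      L.head? = some v ∧ L.getLast? = some r ∧
      (∀ i < n, ((fun i => f^[i] v) i, (fun i => f^[i] v) (i + 1)) ∈ D.edges) := by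
  classical
  set n := Nat.find hn with hn_def
  have hr : f^[n] v = r := Nat.find_spec hn
  have hmin : ∀ m, m < n → f^[m] v ≠ r := fun m hm => Nat.find_min hn hm
  have hmem : ∀ i, i ≤ n → f^[i] v ∈ D.verts := by
    intro i hi
    induction i with
    | zero => exact hv
    | succ i ih =>
      have h1 : f^[i] v ∈ D.verts := ih (by omega)
      rw [Function.iterate_succ_apply']
      exact (hf _ h1 (hmin i (by omega))).1
  refine ⟨n, _, rfl, ?_, ?_, ?_, ?_, ?_, ?_⟩
  · simp
  · have key : ∀ a b : ℕ, a < b → b < n + 1 → f^[a] v = f^[b] v → False := by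
      intro a b hlt hb hab
      have : f^[n - b + a] v = r := by
        have h1 : n = (n - b) + b := by omega
        calc f^[n - b + a] v = f^[n - b] (f^[a] v) := Function.iterate_add_apply f _ _ v
        _ = f^[n - b] (f^[b] v) := by rw [hab]
        _ = f^[n] v := by rw [← Function.iterate_add_apply, ← h1]
        _ = r := hr
      exact hmin (n - b + a) (by omega) this
    have hinj : ∀ a ∈ List.range (n + 1), ∀ b ∈ List.range (n + 1),
        f^[a] v = f^[b] v → a = b := by
      intro a ha b hb hab
      simp only [List.mem_range] at ha hb
      by_contra hne
      rcases Nat.lt_or_gt_of_ne hne with hlt | hlt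
      · exact key a b hlt hb hab
      · exact key b a hlt ha hab.symm
    exact List.Nodup.map_on hinj List.nodup_range
  · intro x hx
    simp only [List.mem_map, List.mem_range] at hx
    obtain ⟨i, hi, rfl⟩ := hx
    exact hmem i (by omega)
  · rw [List.range_succ_eq_map]
    simp
  · rw [List.getLast?_eq_getElem?]
    simp only [List.length_map, List.length_range, Nat.add_sub_cancel]
    rw [List.getElem?_map]
    simp [hr]
  · intro i hi
    have h1 : f^[i] v ∈ D.verts := hmem i (by omega)
    have := (hf _ h1 (hmin i hi)).2
    simpa [Function.iterate_succ_apply'] using this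

lemma reaches_of_iterate (D : DiGraph V) (r : V) (f : V → V)
    (hf : ∀ v ∈ D.verts, v ≠ r → f v ∈ D.verts ∧ (v, f v) ∈ D.edges)
    (v : V) (hv : v ∈ D.verts) (hn : ∃ n, f^[n] v = r) : Reaches D v r := by
  obtain ⟨n, L, hLdef, hne, hnd, hmem, hhead, hlast, hchain⟩ :=
    iterate_list_path D r f hf v hv hn
  refine ⟨L, ⟨⟨hne, hnd, hmem, ?_⟩, hhead, hlast⟩⟩
  change List.IsChain _ _
  rw [hLdef, List.isChain_map]
  rw [show n + 1 = Nat.succ n from rfl, List.isChain_range_succ]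
  exact hchain

lemma reaches_rev_of_iterate (D : DiGraph V) (r : V) (f : V → V)
    (hf : ∀ v ∈ D.verts, v ≠ r → f v ∈ D.verts ∧ (f v, v) ∈ D.edges)
    (v : V) (hv : v ∈ D.verts) (hn : ∃ n, f^[n] v = r) : Reaches D r v := by
  have hf' : ∀ v ∈ D.verts, v ≠ r → f v ∈ D.verts ∧
      (v, f v) ∈ {e : V × V | (e.2, e.1) ∈ D.edges} := fun v hv hvr =>
    ⟨(hf v hv hvr).1, (hf v hv hvr).2⟩
  obtain ⟨n, L, hLdef, hne, hnd, hmem, hhead, hlast, hchain⟩ :=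
    iterate_list_path ⟨D.verts, {e : V × V | (e.2, e.1) ∈ D.edges}⟩ r f hf' v hv hn
  refine ⟨L.reverse, ⟨⟨by simpa using hne, by simpa using hnd, by simpa using hmem, ?_⟩,
    ?_, ?_⟩⟩
  · change List.IsChain _ _
    rw [List.isChain_reverse, hLdef, List.isChain_map]
    rw [show n + 1 = Nat.succ n from rfl, List.isChain_range_succ]
    intro i hi
    exact hchain i hi
  · rw [List.head?_reverse]
    exact hlast
  · rw [List.getLast?_reverse]
    exact hhead

end ReachAux
section PathAux

variable {V : Type*}

lemma exists_next_of_ne_getLast {m : List V} (hne : m ≠ []) {w : V} (hw : w ∈ m)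
    (hwl : w ≠ m.getLast hne) : ∃ w', (w, w') ∈ m.zip m.tail ∧ w' ∈ m := by
  obtain ⟨⟨j, hj⟩, rfl⟩ := List.mem_iff_get.1 hw
  simp only [List.get_eq_getElem] at hwl ⊢
  have hj1 : j + 1 < m.length := by
    rcases Nat.lt_or_ge (j + 1) m.length with h | h
    · exact h
    · exfalso
      apply hwl
      have hje : j = m.length - 1 := by omega
      rw [List.getLast_eq_getElem]
      congr 1
  refine ⟨m[j + 1], ?_, List.getElem_mem _⟩
  have hzlen : j < (m.zip m.tail).length := by
    rw [List.length_zip, List.length_tail]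
    omega
  have : (m.zip m.tail)[j] = (m[j], m.tail[j]'(by rw [List.length_tail]; omega)) :=
    List.getElem_zip ..
  have htail : m.tail[j]'(by rw [List.length_tail]; omega) = m[j + 1] := by
    rw [List.getElem_tail]
  rw [htail] at this
  rw [← this]
  exact List.getElem_mem _

end PathAux
/-- For a chain of directed cycles `(C_j)_{j∈[p]}` and every
`k ∈ [p−1]` there exist an in-arborescence and an out-arborescence inside `⋃ C_j`
meeting only in their common root, covering the prescribed vertex sets. -/
theorem exists_in_out_arborescences {V : Type*} (p : ℕ) (C : ℕ → DiGraph V)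
    (hcyc : ∀ j ∈ Finset.Icc 1 p, IsCycleGraph (C j))
    (hint : ∀ j ∈ Finset.Icc 1 p, ∀ k ∈ Finset.Icc 1 p, j ≠ k →
      (Nat.dist j k = 1 → IsPathGraph (C j ∩ C k)) ∧
      (Nat.dist j k ≠ 1 → C j ∩ C k = DiGraph.emptyGraph))
    (k : ℕ) (hk : k ∈ Finset.Icc 1 (p - 1)) :
    ∃ (r : V) (Tin Tout : DiGraph V),
      IsInArborescence Tin r ∧ IsOutArborescence Tout r ∧
      IsSubgraph Tin (DiGraph.biUnion (↑(Finset.Icc 1 p)) C) ∧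
      IsSubgraph Tout (DiGraph.biUnion (↑(Finset.Icc 1 p)) C) ∧
      Tin.verts ∩ Tout.verts = {r} ∧
      (⋃ i ∈ Finset.Icc (k + 1) p, (C i).verts) ⊆ Tin.verts ∧
      (⋃ i ∈ Finset.Icc 1 k, (C i).verts) \ (C (k + 1)).verts ⊆ Tout.verts := by
  classical
  rw [Finset.mem_Icc] at hk
  obtain ⟨hk1, hk2⟩ := hk
  have hp2 : 2 ≤ p := by omega
  have hkp : k + 1 ≤ p := by omega
  simp only [IsCycleGraph, IsCycleGraphOn] at hcyc
  choose! l hl using hcyc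
  have hlen : ∀ j ∈ Finset.Icc 1 p, 2 ≤ (l j).length := fun j hj => (hl j hj).1
  have hnd : ∀ j ∈ Finset.Icc 1 p, (l j).Nodup := fun j hj => (hl j hj).2.1
  have hCeq : ∀ j ∈ Finset.Icc 1 p, C j = cycleGraph (l j) := fun j hj => (hl j hj).2.2
  have hverts : ∀ j ∈ Finset.Icc 1 p, (C j).verts = {v | v ∈ l j} := by
    intro j hj; rw [hCeq j hj]; rfl
  have hedges : ∀ j ∈ Finset.Icc 1 p, (C j).edges = cycleEdges (l j) := by
    intro j hj; rw [hCeq j hj]; rfl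
  have hkmem : k ∈ Finset.Icc 1 p := by rw [Finset.mem_Icc]; omega
  have hk1mem : (k + 1) ∈ Finset.Icc 1 p := by rw [Finset.mem_Icc]; omega
  obtain ⟨m, hm_ne, hm_nd, hm_eq⟩ :=
    (hint k hkmem (k + 1) hk1mem (by omega)).1 (by simp [Nat.dist])
  have hm_iff : ∀ x, x ∈ m ↔ (x ∈ l k ∧ x ∈ l (k + 1)) := by
    intro x
    have h1 := congrArg DiGraph.verts hm_eq
    rw [show (C k ∩ C (k + 1)).verts = (C k).verts ∩ (C (k + 1)).verts from rfl,
        hverts k hkmem, hverts (k + 1) hk1mem] at h1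
    have h2 := Set.ext_iff.1 h1 x
    simpa [pathGraph] using h2.symm
  have hm_edge : ∀ e ∈ m.zip m.tail, e ∈ cycleEdges (l k) := by
    intro e he
    have h1 := congrArg DiGraph.edges hm_eq
    rw [show (C k ∩ C (k + 1)).edges = (C k).edges ∩ (C (k + 1)).edges from rfl,
        hedges k hkmem, hedges (k + 1) hk1mem] at h1
    have h2 : e ∈ (pathGraph m).edges := he
    rw [← h1] at h2
    exact h2.1
  set r := m.getLast hm_ne with hr_def
  have hr_m : r ∈ m := List.getLast_mem hm_ne
  have hr_k : r ∈ l k := ((hm_iff r).1 hr_m).1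
  have hr_k1 : r ∈ l (k + 1) := ((hm_iff r).1 hr_m).2
  have hdisj : ∀ i j, i ∈ Finset.Icc 1 p → j ∈ Finset.Icc 1 p → i + 2 ≤ j →
      ∀ x, x ∈ l i → x ∈ l j → False := by
    intro i j hi hj hij x hxi hxj
    have hdist : Nat.dist i j ≠ 1 := by simp [Nat.dist]; omega
    have hemp := (hint i hi j hj (by omega)).2 hdist
    have h1 := congrArg DiGraph.verts hemp
    rw [show (C i ∩ C j).verts = (C i).verts ∩ (C j).verts from rfl,
        hverts i hi, hverts j hj] at h1
    have h2 : x ∈ ({v | v ∈ l i} : Set V) ∩ {v | v ∈ l j} := ⟨hxi, hxj⟩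
    rw [h1] at h2
    simpa [DiGraph.emptyGraph] using h2
  have hcons : ∀ j, 1 ≤ j → j + 1 ≤ p → ∃ x, x ∈ l j ∧ x ∈ l (j + 1) := by
    intro j hj1 hj2
    have hjm : j ∈ Finset.Icc 1 p := by rw [Finset.mem_Icc]; omega
    have hjm1 : (j + 1) ∈ Finset.Icc 1 p := by rw [Finset.mem_Icc]; omega
    obtain ⟨m', hne', hnd', heq'⟩ := (hint j hjm (j + 1) hjm1 (by omega)).1 (by simp [Nat.dist])
    have h1 := congrArg DiGraph.verts heq'
    rw [show (C j ∩ C (j + 1)).verts = (C j).verts ∩ (C (j + 1)).verts from rfl,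
        hverts j hjm, hverts (j + 1) hjm1] at h1
    refine ⟨m'.head hne', ?_⟩
    have h2 : m'.head hne' ∈ (pathGraph m').verts := List.head_mem hne'
    rw [← h1] at h2
    exact h2
  -- the in-arborescence data
  set Sin : Set V := {v | ∃ j, j ∈ Finset.Icc (k + 1) p ∧ v ∈ l j} with hSin_def
  set Jm : V → ℕ := fun v => sInf {j | j ∈ Finset.Icc (k + 1) p ∧ v ∈ l j} with hJm_def
  set fIn : V → V := fun v => csucc (l (Jm v)) v with hfIn_def
  set Tin : DiGraph V := ⟨Sin, {e | e.1 ∈ Sin ∧ e.1 ≠ r ∧ e.2 = fIn e.1}⟩ with hTin_def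
  have hJm_mem : ∀ v, v ∈ Sin → Jm v ∈ Finset.Icc (k + 1) p ∧ v ∈ l (Jm v) := by
    intro v hv
    have hne : {j | j ∈ Finset.Icc (k + 1) p ∧ v ∈ l j}.Nonempty := hv
    exact Nat.sInf_mem hne
  have hJm_le : ∀ v j, j ∈ Finset.Icc (k + 1) p → v ∈ l j → Jm v ≤ j :=
    fun v j hj hv => Nat.sInf_le ⟨hj, hv⟩
  have hIccSub : ∀ j, j ∈ Finset.Icc (k + 1) p → j ∈ Finset.Icc 1 p := by
    intro j hj; rw [Finset.mem_Icc] at *; omega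
  have hfIn_mem : ∀ v, v ∈ Sin → fIn v ∈ l (Jm v) ∧ fIn v ∈ Sin := by
    intro v hv
    have h1 : fIn v ∈ l (Jm v) := by
      simp only [hfIn_def]
      exact csucc_mem (hJm_mem v hv).2
    exact ⟨h1, ⟨Jm v, (hJm_mem v hv).1, h1⟩⟩
  have key_in : ∀ J v, v ∈ Sin → Jm v = J → ∃ n, fIn^[n] v = r := by
    intro J
    induction J using Nat.strong_induction_on with
    | _ J IH =>
      intro v hv hJ
      obtain ⟨hJmem, hvl⟩ := hJ ▸ hJm_mem v hv
      rw [Finset.mem_Icc] at hJmem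
      have hJp : J ∈ Finset.Icc 1 p := by rw [Finset.mem_Icc]; omega
      have hndJ := hnd J hJp
      rcases eq_or_lt_of_le hJmem.1 with hbase | hstep
      · -- J = k + 1
        have hJ_all : ∀ x, x ∈ l J → Jm x = J := by
          intro x hx
          have hxS : x ∈ Sin := ⟨J, by rw [Finset.mem_Icc]; omega, hx⟩
          have h1 : Jm x ≤ J := hJm_le x J (by rw [Finset.mem_Icc]; omega) hx
          have h2 := Finset.mem_Icc.1 (hJm_mem x hxS).1
          omega
        have hiter : ∀ i x, x ∈ l J → fIn^[i] x = (csucc (l J))^[i] x ∧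
            (csucc (l J))^[i] x ∈ l J := by
          intro i
          induction i with
          | zero => intro x hx; exact ⟨rfl, hx⟩
          | succ i ih =>
            intro x hx
            rw [Function.iterate_succ_apply fIn, Function.iterate_succ_apply (csucc (l J))]
            have hfx : fIn x = csucc (l J) x := by
              simp only [hfIn_def]
              rw [hJ_all x hx]
            rw [hfx]
            exact ih _ (csucc_mem hx)
        obtain ⟨i, hi⟩ := csucc_orbit hndJ hvl (show r ∈ l J from hbase ▸ hr_k1)
        exact ⟨i, by rw [(hiter i v hvl).1, hi]⟩
      · -- k + 1 < J
        obtain ⟨w, hw1, hw2⟩ := hcons (J - 1) (by omega) (by omega)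
        have hw2' : w ∈ l J := by rwa [show J - 1 + 1 = J by omega] at hw2
        have hJw : Jm w < J := by
          have := hJm_le w (J - 1) (by rw [Finset.mem_Icc]; omega) hw1
          omega
        obtain ⟨i, hi⟩ := csucc_orbit hndJ hvl hw2'
        have hP : ∃ i, Jm ((csucc (l J))^[i] v) < J := ⟨i, by rw [hi]; exact hJw⟩
        have hspec : Jm ((csucc (l J))^[Nat.find hP] v) < J := Nat.find_spec hP
        have hiter : ∀ j, j ≤ Nat.find hP → fIn^[j] v = (csucc (l J))^[j] v ∧
            (csucc (l J))^[j] v ∈ l J := by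
          intro j hj
          induction j with
          | zero => exact ⟨rfl, hvl⟩
          | succ j ih =>
            obtain ⟨hje, hjl⟩ := ih (by omega)
            have hxj : Jm ((csucc (l J))^[j] v) = J := by
              have h1 : Jm ((csucc (l J))^[j] v) ≤ J :=
                hJm_le _ J (by rw [Finset.mem_Icc]; omega) hjl
              have h2 := Nat.find_min hP (show j < Nat.find hP by omega)
              omega
            constructor
            · rw [Function.iterate_succ_apply' fIn,
                Function.iterate_succ_apply' (csucc (l J)), hje]
              simp only [hfIn_def]
              rw [hxj]
            · rw [Function.iterate_succ_apply' (csucc (l J))]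
              exact csucc_mem hjl
        obtain ⟨hfe, hfl⟩ := hiter (Nat.find hP) le_rfl
        have hxS : (csucc (l J))^[Nat.find hP] v ∈ Sin :=
          ⟨J, by rw [Finset.mem_Icc]; omega, hfl⟩
        obtain ⟨n', hn'⟩ := IH (Jm ((csucc (l J))^[Nat.find hP] v)) hspec _ hxS rfl
        refine ⟨n' + Nat.find hP, ?_⟩
        rw [Function.iterate_add_apply, hfe, hn']
  have hreach_in : ∀ v ∈ Sin, ∃ n, fIn^[n] v = r := fun v hv => key_in (Jm v) v hv rfl
  -- the out-arborescence data
  set Slow : Set V := {v | ∃ j, j ∈ Finset.Icc 1 k ∧ v ∈ l j} with hSlow_def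
  set Sout : Set V := (Slow \ {v | v ∈ l (k + 1)}) ∪ {r} with hSout_def
  set Im : V → ℕ := fun v => sSup {j | j ∈ Finset.Icc 1 k ∧ v ∈ l j} with hIm_def
  set gOut : V → V := fun v => cpred (l (Im v)) v with hgOut_def
  set Tout : DiGraph V := ⟨Sout, {e | e.2 ∈ Sout ∧ e.2 ≠ r ∧ e.1 = gOut e.2}⟩ with hTout_def
  have hbdd : ∀ v : V, BddAbove {j | j ∈ Finset.Icc 1 k ∧ v ∈ l j} := by
    intro v
    refine ⟨k, fun j hj => ?_⟩
    exact (Finset.mem_Icc.1 hj.1).2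
  have hIm_mem : ∀ v, v ∈ Slow → Im v ∈ Finset.Icc 1 k ∧ v ∈ l (Im v) := by
    intro v hv
    have hne : {j | j ∈ Finset.Icc 1 k ∧ v ∈ l j}.Nonempty := hv
    exact Nat.sSup_mem hne (hbdd v)
  have hIm_ge : ∀ v j, j ∈ Finset.Icc 1 k → v ∈ l j → j ≤ Im v :=
    fun v j hj hv => le_csSup (hbdd v) ⟨hj, hv⟩
  have hIccSub' : ∀ j, j ∈ Finset.Icc 1 k → j ∈ Finset.Icc 1 p := by
    intro j hj; rw [Finset.mem_Icc] at *; omega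
  have hlk1_sub : ∀ x, x ∈ m → x ∈ l (k + 1) := fun x hx => ((hm_iff x).1 hx).2
  have hSoutSlow : ∀ v, v ∈ Sout → v ≠ r → v ∈ Slow ∧ v ∉ l (k + 1) := by
    intro v hv hvr
    rcases hv with h | h
    · exact ⟨h.1, h.2⟩
    · simp only [Set.mem_singleton_iff] at h
      exact absurd h hvr
  have hclose : ∀ v, v ∈ Sout → v ≠ r → gOut v ∈ Sout := by
    intro v hv hvr
    obtain ⟨hvlow, hvk1⟩ := hSoutSlow v hv hvr
    obtain ⟨hImem, hvl⟩ := hIm_mem v hvlow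
    rw [Finset.mem_Icc] at hImem
    have hIp : Im v ∈ Finset.Icc 1 p := by rw [Finset.mem_Icc]; omega
    have hg_mem : gOut v ∈ l (Im v) := by
      simp only [hgOut_def]
      exact cpred_mem hvl
    by_cases hgk1 : gOut v ∈ l (k + 1)
    · have hIk : Im v = k := by
        by_contra hne
        exact hdisj (Im v) (k + 1) hIp hk1mem (by omega) _ hg_mem hgk1
      have hg_lk : gOut v ∈ l k := hIk ▸ hg_mem
      have hgm : gOut v ∈ m := (hm_iff _).2 ⟨hg_lk, hgk1⟩
      have hgr : gOut v = r := by
        by_contra hne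
        obtain ⟨w', hw'_zip, hw'_m⟩ := exists_next_of_ne_getLast hm_ne hgm hne
        have hw'_edge : (gOut v, w') ∈ cycleEdges (l k) := hm_edge _ hw'_zip
        have h1 := edge_snd_eq (hnd k hkmem) hw'_edge
        have h2 : csucc (l k) (gOut v) = v := by
          have h3 : gOut v = cpred (l k) v := by
            simp only [hgOut_def]
            rw [hIk]
          rw [h3]
          exact csucc_cpred (hnd k hkmem) (hIk ▸ hvl)
        rw [h2] at h1
        have hvm : v ∈ m := by rw [← h1.2]; exact hw'_m
        exact hvk1 (hlk1_sub v hvm)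
      rw [hgr]
      exact Or.inr rfl
    · exact Or.inl ⟨⟨Im v, by rw [Finset.mem_Icc]; omega, hg_mem⟩, hgk1⟩
  have key_out : ∀ d J v, v ∈ Slow → Im v = J → k - J = d → ∃ n, gOut^[n] v = r := by
    intro d
    induction d using Nat.strong_induction_on with
    | _ d IH =>
      intro J v hv hJ hd
      obtain ⟨hJmem, hvl⟩ := hJ ▸ hIm_mem v hv
      rw [Finset.mem_Icc] at hJmem
      have hJp : J ∈ Finset.Icc 1 p := by rw [Finset.mem_Icc]; omega
      have hndJ := hnd J hJp
      by_cases hJk : J = k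
      · subst hJk
        have hJ_all : ∀ x, x ∈ l J → Im x = J := by
          intro x hx
          have hxS : x ∈ Slow := ⟨J, by rw [Finset.mem_Icc]; omega, hx⟩
          have h1 : J ≤ Im x := hIm_ge x J (by rw [Finset.mem_Icc]; omega) hx
          have h2 := Finset.mem_Icc.1 (hIm_mem x hxS).1
          omega
        have hiter : ∀ i x, x ∈ l J → gOut^[i] x = (cpred (l J))^[i] x ∧
            (cpred (l J))^[i] x ∈ l J := by
          intro i
          induction i with
          | zero => intro x hx; exact ⟨rfl, hx⟩
          | succ i ih =>
            intro x hx
            rw [Function.iterate_succ_apply gOut, Function.iterate_succ_apply (cpred (l J))]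
            have hfx : gOut x = cpred (l J) x := by
              simp only [hgOut_def]
              rw [hJ_all x hx]
            rw [hfx]
            exact ih _ (cpred_mem hx)
        obtain ⟨i, hi⟩ := cpred_orbit hndJ hvl hr_k
        exact ⟨i, by rw [(hiter i v hvl).1, hi]⟩
      · have hJltk : J < k := by omega
        obtain ⟨w, hw1, hw2⟩ := hcons J (by omega) (by omega)
        have hwIm : J < Im w := by
          have := hIm_ge w (J + 1) (by rw [Finset.mem_Icc]; omega) hw2
          omega
        obtain ⟨i, hi⟩ := cpred_orbit hndJ hvl hw1
        have hP : ∃ i, J < Im ((cpred (l J))^[i] v) := ⟨i, by rw [hi]; exact hwIm⟩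
        have hspec : J < Im ((cpred (l J))^[Nat.find hP] v) := Nat.find_spec hP
        have hiter : ∀ j, j ≤ Nat.find hP → gOut^[j] v = (cpred (l J))^[j] v ∧
            (cpred (l J))^[j] v ∈ l J := by
          intro j hj
          induction j with
          | zero => exact ⟨rfl, hvl⟩
          | succ j ih =>
            obtain ⟨hje, hjl⟩ := ih (by omega)
            have hxj : Im ((cpred (l J))^[j] v) = J := by
              have h1 : J ≤ Im ((cpred (l J))^[j] v) :=
                hIm_ge _ J (by rw [Finset.mem_Icc]; omega) hjl
              have h2 := Nat.find_min hP (show j < Nat.find hP by omega)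
              omega
            constructor
            · rw [Function.iterate_succ_apply' gOut,
                Function.iterate_succ_apply' (cpred (l J)), hje]
              simp only [hgOut_def]
              rw [hxj]
            · rw [Function.iterate_succ_apply' (cpred (l J))]
              exact cpred_mem hjl
        obtain ⟨hfe, hfl⟩ := hiter (Nat.find hP) le_rfl
        have hxlow : (cpred (l J))^[Nat.find hP] v ∈ Slow :=
          ⟨J, by rw [Finset.mem_Icc]; omega, hfl⟩
        have hIxk := Finset.mem_Icc.1 (hIm_mem _ hxlow).1
        obtain ⟨n', hn'⟩ := IH (k - Im ((cpred (l J))^[Nat.find hP] v)) (by omega) _ _ hxlow rfl rfl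
        refine ⟨n' + Nat.find hP, ?_⟩
        rw [Function.iterate_add_apply, hfe, hn']
  have hreach_out : ∀ v ∈ Slow, ∃ n, gOut^[n] v = r :=
    fun v hv => key_out (k - Im v) (Im v) v hv rfl rfl
  -- membership of the root
  have hrSin : r ∈ Sin := ⟨k + 1, by rw [Finset.mem_Icc]; omega, hr_k1⟩
  have hrSout : r ∈ Sout := Or.inr rfl
  -- assemble
  refine ⟨r, Tin, Tout, ⟨hrSin, ?_, ?_, ?_, ?_⟩, ⟨hrSout, ?_, ?_, ?_, ?_⟩, ⟨?_, ?_, ?_⟩,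
    ⟨?_, ?_, ?_⟩, ?_, ?_, ?_⟩
  · -- WF Tin
    rintro ⟨a, b⟩ ⟨ha, har, hb⟩
    simp only at ha har hb
    obtain ⟨hJmem, hal⟩ := hJm_mem a ha
    refine ⟨ha, ?_, ?_⟩
    · rw [hb]; exact (hfIn_mem a ha).2
    · rw [hb]
      have := csucc_ne (hnd _ (hIccSub _ hJmem)) (hlen _ (hIccSub _ hJmem)) hal
      simp only [hfIn_def]
      exact fun h => this h.symm
  · -- Reaches Tin v r
    intro v hv
    exact reaches_of_iterate Tin r fIn
      (fun x hx hxr => ⟨(hfIn_mem x hx).2, ⟨hx, hxr, rfl⟩⟩) v hv (hreach_in v hv)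
  · -- unique out-edge
    intro v hv hvr
    exact ⟨fIn v, ⟨hv, hvr, rfl⟩, fun u hu => hu.2.2⟩
  · -- no out-edge at root
    intro u hu
    exact hu.2.1 rfl
  · -- WF Tout
    rintro ⟨a, b⟩ ⟨hb, hbr, ha⟩
    simp only at hb hbr ha
    obtain ⟨hblow, _⟩ := hSoutSlow b hb hbr
    obtain ⟨hImem, hbl⟩ := hIm_mem b hblow
    refine ⟨?_, hb, ?_⟩
    · rw [ha]; exact hclose b hb hbr
    · rw [ha]
      have := cpred_ne (hnd _ (hIccSub' _ hImem)) (hlen _ (hIccSub' _ hImem)) hbl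
      simp only [hgOut_def]
      exact this
  · -- Reaches Tout r v
    intro v hv
    refine reaches_rev_of_iterate Tout r gOut
      (fun x hx hxr => ⟨hclose x hx hxr, ⟨hx, hxr, rfl⟩⟩) v hv ?_
    by_cases hvr : v = r
    · exact ⟨0, hvr⟩
    · exact hreach_out v (hSoutSlow v hv hvr).1
  · -- unique in-edge
    intro v hv hvr
    exact ⟨gOut v, ⟨hv, hvr, rfl⟩, fun u hu => hu.2.2⟩
  · -- no in-edge at root
    intro u hu
    exact hu.2.1 rfl
  · -- Tin.verts ⊆ biUnion
    rintro x ⟨j, hj, hxl⟩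
    refine Set.mem_biUnion (Finset.mem_coe.2 (hIccSub j hj)) ?_
    rw [hverts j (hIccSub j hj)]
    exact hxl
  · -- Tin.edges ⊆ biUnion
    rintro ⟨a, b⟩ ⟨ha, har, hb⟩
    simp only at ha har hb
    obtain ⟨hJmem, hal⟩ := hJm_mem a ha
    have hedge : (a, fIn a) ∈ cycleEdges (l (Jm a)) := by
      simp only [hfIn_def]
      exact csucc_edge hal
    rw [hb]
    refine Set.mem_biUnion (Finset.mem_coe.2 (hIccSub _ hJmem)) ?_
    rw [hedges _ (hIccSub _ hJmem)]
    exact hedge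
  · -- Tin edge endpoints
    rintro ⟨a, b⟩ ⟨ha, har, hb⟩
    simp only at ha har hb
    exact ⟨ha, by rw [hb]; exact (hfIn_mem a ha).2⟩
  · -- Tout.verts ⊆ biUnion
    intro x hx
    rcases hx with ⟨⟨j, hj, hxl⟩, _⟩ | hx
    · refine Set.mem_biUnion (Finset.mem_coe.2 (hIccSub' j hj)) ?_
      rw [hverts j (hIccSub' j hj)]
      exact hxl
    · simp only [Set.mem_singleton_iff] at hx
      subst hx
      refine Set.mem_biUnion (Finset.mem_coe.2 hkmem) ?_
      rw [hverts k hkmem]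
      exact hr_k
  · -- Tout.edges ⊆ biUnion
    rintro ⟨a, b⟩ ⟨hb, hbr, ha⟩
    simp only at hb hbr ha
    obtain ⟨hblow, _⟩ := hSoutSlow b hb hbr
    obtain ⟨hImem, hbl⟩ := hIm_mem b hblow
    have hedge : (gOut b, b) ∈ cycleEdges (l (Im b)) := by
      simp only [hgOut_def]
      exact cpred_edge hbl
    rw [ha]
    refine Set.mem_biUnion (Finset.mem_coe.2 (hIccSub' _ hImem)) ?_
    rw [hedges _ (hIccSub' _ hImem)]
    exact hedge
  · -- Tout edge endpoints
    rintro ⟨a, b⟩ ⟨hb, hbr, ha⟩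
    simp only at hb hbr ha
    exact ⟨by rw [ha]; exact hclose b hb hbr, hb⟩
  · -- intersection of vertex sets
    apply Set.eq_singleton_iff_unique_mem.2
    refine ⟨⟨hrSin, hrSout⟩, ?_⟩
    rintro x ⟨⟨j, hj, hxj⟩, hxout⟩
    rcases hxout with ⟨⟨i, hi, hxi⟩, hxnk1⟩ | hx
    · rw [Finset.mem_Icc] at hi hj
      exfalso
      rcases Nat.lt_or_ge (i + 1) j with hc | hc
      · exact hdisj i j (by rw [Finset.mem_Icc]; omega) (by rw [Finset.mem_Icc]; omega)
          (by omega) x hxi hxj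
      · have hjk : j = k + 1 := by omega
        rw [hjk] at hxj
        exact hxnk1 hxj
    · simpa using hx
  · -- coverage of Tin
    intro x hx
    simp only [Set.mem_iUnion] at hx
    obtain ⟨i, hi, hxi⟩ := hx
    rw [hverts i (hIccSub i hi)] at hxi
    exact ⟨i, hi, hxi⟩
  · -- coverage of Tout
    rintro x ⟨hx1, hx2⟩
    simp only [Set.mem_iUnion] at hx1
    obtain ⟨i, hi, hxi⟩ := hx1
    rw [hverts i (hIccSub' i hi)] at hxi
    rw [hverts (k + 1) hk1mem] at hx2
    exact Or.inl ⟨⟨i, hi, hxi⟩, hx2⟩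
end
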